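/- In the affine Schur algebra S△(2,2) over ℚ at q = 1 with λ = (2,0), the quotient S△(2,2)/(S△(2,2) e_λ S△(2,2)) is isomorphic as a ℚ-algebra to the Laurent polynomial ring ℚ[x, x⁻¹]. -/

import Mathlib

noncomputable section

/-- The row vector `row(A) = (Σ_j a_{i,j})_i` of a `ℤ×ℤ` matrix with entries in `ℕ`. -/
def rowS (A : ℤ → ℤ → ℕ) (i : ℤ) : ℕ := ∑ᶠ j, A i j

/-- The column vector `col(A) = (Σ_i a_{i,j})_j`. -/
def colS (A : ℤ → ℤ → ℕ) (j : ℤ) : ℕ := ∑ᶠ i, A i j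

/-- `Θ△(n,r)`: the set of `ℤ×ℤ` matrices over `ℕ` with `a_{i,j} = a_{i+n,j+n}`, finitely
many nonzero entries in each row and column, and total entry sum `r` over `n` consecutive
rows (equivalently columns). -/
def ThetaAff (n r : ℕ) : Set (ℤ → ℤ → ℕ) :=
  {A | (∀ i j, A (i + n) (j + n) = A i j) ∧
       (∀ i, (Function.support (A i)).Finite) ∧
       (∀ j, (Function.support fun i => A i j).Finite) ∧
       (∑ i ∈ Finset.Icc (1 : ℤ) (n : ℤ), rowS A i) = r ∧
       (∑ j ∈ Finset.Icc (1 : ℤ) (n : ℤ), colS A j) = r}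

/-- `Λ△(n,r)`: `n`-periodic sequences of natural numbers summing to `r` over a period. -/
def LambdaAff (n r : ℕ) : Set (ℤ → ℕ) :=
  {l | (∀ i, l (i + n) = l i) ∧ (∑ i ∈ Finset.Icc (1 : ℤ) (n : ℤ), l i) = r}

/-- The diagonal matrix `diag(λ)` attached to `λ ∈ Λ△(n,r)`. -/
def diagM (l : ℤ → ℕ) : ℤ → ℤ → ℕ := fun i j => if i = j then l i else 0

/-- The `n`-periodic elementary matrix `E△_{i,j}`, with `1` at the positions
`(i + sn, j + sn)`, `s ∈ ℤ`. -/
def Edel (n : ℕ) (i j : ℤ) : ℤ → ℤ → ℕ :=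
  fun x y => if x - i = y - j ∧ (n : ℤ) ∣ (x - i) then 1 else 0

/-- `Λ(∞, m)`: finitely supported sequences `t : ℤ → ℕ` with `Σ t = m`. -/
def CompInf (m : ℕ) : Set (ℤ → ℕ) :=
  {t | (Function.support t).Finite ∧ ∑ᶠ u, t u = m}

/-- `A + Σ_u t_u (E△_{h,u} - E△_{h+1,u})`. -/
def rowAdd (n : ℕ) (h : ℤ) (t : ℤ → ℕ) (A : ℤ → ℤ → ℕ) : ℤ → ℤ → ℕ :=
  fun x y => A x y + (if (n : ℤ) ∣ (x - h) then t (y - x + h) else 0)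
               - (if (n : ℤ) ∣ (x - (h + 1)) then t (y - x + (h + 1)) else 0)

/-- `A - Σ_u t_u (E△_{h,u} - E△_{h+1,u})`. -/
def rowSub (n : ℕ) (h : ℤ) (t : ℤ → ℕ) (A : ℤ → ℤ → ℕ) : ℤ → ℤ → ℕ :=
  fun x y => A x y + (if (n : ℤ) ∣ (x - (h + 1)) then t (y - x + (h + 1)) else 0)
               - (if (n : ℤ) ∣ (x - h) then t (y - x + h) else 0)

/-- `A + Σ_u t_u (E△_{u,h+1} - E△_{u,h})`. -/
def colAdd (n : ℕ) (h : ℤ) (t : ℤ → ℕ) (A : ℤ → ℤ → ℕ) : ℤ → ℤ → ℕ :=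
  fun x y => A x y + (if (n : ℤ) ∣ (y - (h + 1)) then t (x - y + (h + 1)) else 0)
               - (if (n : ℤ) ∣ (y - h) then t (x - y + h) else 0)

/-- `A - Σ_u t_u (E△_{u,h+1} - E△_{u,h})`. -/
def colSub (n : ℕ) (h : ℤ) (t : ℤ → ℕ) (A : ℤ → ℤ → ℕ) : ℤ → ℤ → ℕ :=
  fun x y => A x y + (if (n : ℤ) ∣ (y - h) then t (x - y + h) else 0)
               - (if (n : ℤ) ∣ (y - (h + 1)) then t (x - y + (h + 1)) else 0)

/-- An algebra `S` realizing the affine Schur algebra `S△(n,r)` over `ℚ` at `q = 1`: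
it has a basis `{e_A : A ∈ Θ△(n,r)}` whose structure constants vanish unless
`col(A) = row(A')`, diagonal basis elements act as partial identities, and the transpose
of matrices induces an involutory anti-automorphism `τ`. -/
structure AffineSchurAlg (n r : ℕ) (S : Type) [Ring S] [Algebra ℚ S] where
  /-- the basis elements `e_A` (extended by `0` off `Θ△(n,r)`) -/
  e : (ℤ → ℤ → ℕ) → S
  indep : LinearIndependent ℚ (fun A : ThetaAff n r => e A.1)
  span_eq_top : Submodule.span ℚ (e '' ThetaAff n r) = ⊤
  vanish : ∀ A, A ∉ ThetaAff n r → e A = 0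
  mul_disjoint : ∀ A B, A ∈ ThetaAff n r → B ∈ ThetaAff n r →
    colS A ≠ rowS B → e A * e B = 0
  diag_row : ∀ A ∈ ThetaAff n r, e (diagM (rowS A)) * e A = e A
  diag_col : ∀ A ∈ ThetaAff n r, e A * e (diagM (colS A)) = e A
  /-- the anti-involution `e_A ↦ e_{Aᵀ}` -/
  tau : S →ₗ[ℚ] S
  tau_mul : ∀ a b : S, tau (a * b) = tau b * tau a
  tau_invol : ∀ a : S, tau (tau a) = a
  tau_e : ∀ A, tau (e A) = e (fun x y => A y x)

/-- An algebra realizing the affine Schur algebra `S△(2,2)` over `ℚ` at `q = 1`,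
together with the multiplication formulas of Lusztig and of Du–Deng–Fu
(Propositions 2.5, 2.6, 2.7 of the paper, for `n = 2`), and the shift formulas
(multiplication by `e_{2E△_{1,3}}` and `e_{2E△_{3,1}}`) coming from the Hecke-algebra
description. -/
structure AffineSchur22 (S : Type) [Ring S] [Algebra ℚ S] extends
    AffineSchurAlg 2 2 S where
  /-- Proposition 2.5(1): multiplication by `e_{B_m}`,
  `B_m = diag(λ) + m E△_{h,h+1} - m E△_{h+1,h+1}`, `λ = row(A)`. -/
  lusztig_row_plus : ∀ (h : ℤ) (m : ℕ), ∀ A ∈ ThetaAff 2 2, m ≤ rowS A (h + 1) →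
    e (fun x y => diagM (rowS A) x y + m * Edel 2 h (h + 1) x y
        - m * Edel 2 (h + 1) (h + 1) x y) * e A
      = ∑ᶠ t ∈ {t | t ∈ CompInf m ∧ ∀ u, t u ≤ A (h + 1) u},
          ((∏ᶠ u, Nat.choose (A h u + t u) (t u) : ℕ) : ℚ) • e (rowAdd 2 h t A)
  /-- Proposition 2.5(2): multiplication by `e_{C_m}`,
  `C_m = diag(λ) - m E△_{h,h} + m E△_{h+1,h}`, `λ = row(A)`. -/
  lusztig_row_minus : ∀ (h : ℤ) (m : ℕ), ∀ A ∈ ThetaAff 2 2, m ≤ rowS A h →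
    e (fun x y => diagM (rowS A) x y - m * Edel 2 h h x y
        + m * Edel 2 (h + 1) h x y) * e A
      = ∑ᶠ t ∈ {t | t ∈ CompInf m ∧ ∀ u, t u ≤ A h u},
          ((∏ᶠ u, Nat.choose (A (h + 1) u + t u) (t u) : ℕ) : ℚ) • e (rowSub 2 h t A)
  /-- Proposition 2.6(1): right multiplication by `e_{B_m}`,
  `B_m = diag(λ) + m E△_{h,h+1} - m E△_{h,h}`, `λ = col(A)`. -/
  lusztig_col_plus : ∀ (h : ℤ) (m : ℕ), ∀ A ∈ ThetaAff 2 2, m ≤ colS A h →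
    e A * e (fun x y => diagM (colS A) x y + m * Edel 2 h (h + 1) x y
        - m * Edel 2 h h x y)
      = ∑ᶠ t ∈ {t | t ∈ CompInf m ∧ ∀ u, t u ≤ A u h},
          ((∏ᶠ u, Nat.choose (A u (h + 1) + t u) (t u) : ℕ) : ℚ) • e (colAdd 2 h t A)
  /-- Proposition 2.6(2): right multiplication by `e_{C_m}`,
  `C_m = diag(λ) - m E△_{h+1,h+1} + m E△_{h+1,h}`, `λ = col(A)`. -/
  lusztig_col_minus : ∀ (h : ℤ) (m : ℕ), ∀ A ∈ ThetaAff 2 2, m ≤ colS A (h + 1) →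
    e A * e (fun x y => diagM (colS A) x y - m * Edel 2 (h + 1) (h + 1) x y
        + m * Edel 2 (h + 1) h x y)
      = ∑ᶠ t ∈ {t | t ∈ CompInf m ∧ ∀ u, t u ≤ A u (h + 1)},
          ((∏ᶠ u, Nat.choose (A u h + t u) (t u) : ℕ) : ℚ) • e (colSub 2 h t A)
  /-- Proposition 2.7: multiplication by `e_{D_m}`,
  `D_m = diag(λ) - E△_{h,h} + E△_{h,h+mn}`, `λ = row(A)`, `m ≠ 0`. -/
  lusztig_shift : ∀ (h : ℤ) (m : ℤ), m ≠ 0 → ∀ A ∈ ThetaAff 2 2, 1 ≤ rowS A h →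
    e (fun x y => diagM (rowS A) x y - Edel 2 h h x y + Edel 2 h (h + 2 * m) x y) * e A
      = ∑ᶠ u ∈ {u : ℤ | 1 ≤ A h u},
          ((A h (u + 2 * m) + 1 : ℕ) : ℚ) •
            e (fun x y => A x y + Edel 2 h (u + 2 * m) x y - Edel 2 h u x y)
  /-- multiplication by `e_{2E△_{1,3}}` shifts both column indices by `2`
  (Proposition 2.8 of the paper). -/
  x2_shift : ∀ i j : ℤ,
    e (fun x y => 2 * Edel 2 1 3 x y) * e (fun x y => Edel 2 1 i x y + Edel 2 1 j x y)
      = e (fun x y => Edel 2 1 (i + 2) x y + Edel 2 1 (j + 2) x y)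
  /-- multiplication by `e_{2E△_{3,1}}` shifts both column indices by `-2`. -/
  x2inv_shift : ∀ i j : ℤ,
    e (fun x y => 2 * Edel 2 3 1 x y) * e (fun x y => Edel 2 1 i x y + Edel 2 1 j x y)
      = e (fun x y => Edel 2 1 (i - 2) x y + Edel 2 1 (j - 2) x y)

/-- The weight `λ = (2,0) ∈ Λ△(2,2)`. -/
def lam0 : ℤ → ℕ := fun i => if (2 : ℤ) ∣ (i - 1) then 2 else 0

/-- The weight `μ = (0,2) ∈ Λ△(2,2)`. -/
def mu0 : ℤ → ℕ := fun i => if (2 : ℤ) ∣ (i - 2) then 2 else 0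

/-- The weight `ν = (1,1) ∈ Λ△(2,2)`. -/
def nu0 : ℤ → ℕ := fun _ => 1

/-- The matrix `E△_{i,j} + E△_{k,l}` (for `n = 2`). -/
def Mat2 (i j k l : ℤ) : ℤ → ℤ → ℕ := fun x y => Edel 2 i j x y + Edel 2 k l x y

section PartA

open Function

lemma edel_apply (i j x y : ℤ) :
    Edel 2 i j x y = if x - i = y - j ∧ (2:ℤ) ∣ (x - i) then 1 else 0 := by
  simp [Edel]

lemma mat2_apply (p a q b x y : ℤ) :
    Mat2 p a q b x y = (if x - p = y - a ∧ (2:ℤ) ∣ (x - p) then 1 else 0)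
      + (if x - q = y - b ∧ (2:ℤ) ∣ (x - q) then 1 else 0) := by
  simp [Mat2, Edel]

lemma support_row_edel (c : ℕ) (i j x : ℤ) :
    (Function.support (fun y => c * Edel 2 i j x y)).Finite := by
  apply Set.Finite.subset (Set.finite_singleton (x - i + j))
  intro y hy
  simp only [Function.mem_support, edel_apply] at hy
  simp only [Set.mem_singleton_iff]
  by_contra hne
  apply hy
  rw [if_neg, mul_zero]
  rintro ⟨h1, -⟩
  omega

lemma support_col_edel (c : ℕ) (i j y : ℤ) :
    (Function.support (fun x => c * Edel 2 i j x y)).Finite := by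
  apply Set.Finite.subset (Set.finite_singleton (y - j + i))
  intro x hx
  simp only [Function.mem_support, edel_apply] at hx
  simp only [Set.mem_singleton_iff]
  by_contra hne
  apply hx
  rw [if_neg, mul_zero]
  rintro ⟨h1, -⟩
  omega

lemma row_edel (c : ℕ) (i j x : ℤ) :
    ∑ᶠ y, c * Edel 2 i j x y = if (2:ℤ) ∣ (x - i) then c else 0 := by
  by_cases h : (2:ℤ) ∣ (x - i)
  · rw [if_pos h, finsum_eq_single _ (x - i + j)]
    · simp only [edel_apply]
      rw [if_pos ⟨by ring, h⟩, mul_one]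
    · intro y hy
      simp only [edel_apply]
      rw [if_neg, mul_zero]
      rintro ⟨h1, -⟩
      omega
  · rw [if_neg h, finsum_eq_zero_of_forall_eq_zero]
    intro y
    simp only [edel_apply]
    rw [if_neg, mul_zero]
    rintro ⟨-, h2⟩
    exact h h2

lemma col_edel (c : ℕ) (i j y : ℤ) :
    ∑ᶠ x, c * Edel 2 i j x y = if (2:ℤ) ∣ (y - j) then c else 0 := by
  by_cases h : (2:ℤ) ∣ (y - j)
  · rw [if_pos h, finsum_eq_single _ (y - j + i)]
    · simp only [edel_apply]
      rw [if_pos ⟨by ring, by omega⟩, mul_one]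
    · intro x hx
      simp only [edel_apply]
      rw [if_neg, mul_zero]
      rintro ⟨h1, -⟩
      omega
  · rw [if_neg h, finsum_eq_zero_of_forall_eq_zero]
    intro x
    simp only [edel_apply]
    rw [if_neg, mul_zero]
    rintro ⟨h1, h2⟩
    apply h
    omega

lemma rowS_mat2 (p a q b : ℤ) : rowS (Mat2 p a q b) =
    fun i => (if (2:ℤ) ∣ (i - p) then 1 else 0) + (if (2:ℤ) ∣ (i - q) then 1 else 0) := by
  funext i
  show ∑ᶠ y, (Edel 2 p a i y + Edel 2 q b i y) = _
  have h1 := support_row_edel 1 p a i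
  have h2 := support_row_edel 1 q b i
  simp only [one_mul] at h1 h2
  rw [finsum_add_distrib h1 h2]
  have e1 := row_edel 1 p a i
  have e2 := row_edel 1 q b i
  simp only [one_mul] at e1 e2
  rw [e1, e2]

lemma colS_mat2 (p a q b : ℤ) : colS (Mat2 p a q b) =
    fun j => (if (2:ℤ) ∣ (j - a) then 1 else 0) + (if (2:ℤ) ∣ (j - b) then 1 else 0) := by
  funext j
  show ∑ᶠ x, (Edel 2 p a x j + Edel 2 q b x j) = _
  have h1 := support_col_edel 1 p a j
  have h2 := support_col_edel 1 q b j
  simp only [one_mul] at h1 h2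
  rw [finsum_add_distrib h1 h2]
  have e1 := col_edel 1 p a j
  have e2 := col_edel 1 q b j
  simp only [one_mul] at e1 e2
  rw [e1, e2]

lemma rowS_diag (l : ℤ → ℕ) : rowS (diagM l) = l := by
  funext i
  show ∑ᶠ j, (if i = j then l i else 0) = l i
  rw [finsum_eq_single _ i]
  · simp
  · intro j hj
    rw [if_neg (fun h => hj h.symm)]

lemma colS_diag (l : ℤ → ℕ) : colS (diagM l) = l := by
  funext j
  show ∑ᶠ i, (if i = j then l i else 0) = l j
  rw [finsum_eq_single _ j]
  · simp
  · intro i hi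
    rw [if_neg hi]

lemma rowS_mat2_nu (a b : ℤ) : rowS (Mat2 1 a 2 b) = nu0 := by
  rw [rowS_mat2]; funext i; simp only [nu0]; split_ifs <;> omega

lemma rowS_mat2_lam (a b : ℤ) : rowS (Mat2 1 a 1 b) = lam0 := by
  rw [rowS_mat2]; funext i; simp only [lam0]; split_ifs <;> omega

lemma rowS_mat2_mu (a b : ℤ) : rowS (Mat2 2 a 2 b) = mu0 := by
  rw [rowS_mat2]; funext i; simp only [mu0]; split_ifs <;> omega

lemma colS_mat2_nu {a b : ℤ} (p q : ℤ) (h : ¬ (2:ℤ) ∣ (a + b)) :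
    colS (Mat2 p a q b) = nu0 := by
  rw [colS_mat2]; funext j; simp only [nu0]; split_ifs <;> omega

lemma colS_mat2_lam {a b : ℤ} (p q : ℤ) (ha : (2:ℤ) ∣ (a-1)) (hb : (2:ℤ) ∣ (b-1)) :
    colS (Mat2 p a q b) = lam0 := by
  rw [colS_mat2]; funext j; simp only [lam0]; split_ifs <;> omega

lemma colS_mat2_mu {a b : ℤ} (p q : ℤ) (ha : (2:ℤ) ∣ a) (hb : (2:ℤ) ∣ b) :
    colS (Mat2 p a q b) = mu0 := by
  rw [colS_mat2]; funext j; simp only [mu0]; split_ifs <;> omega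

end PartA
section PartB
open Function

def tE21 : ℤ → ℤ → ℕ := fun x y => 2 * Edel 2 2 1 x y
def tE12 : ℤ → ℤ → ℕ := fun x y => 2 * Edel 2 1 2 x y

lemma rowS_tE21 : rowS tE21 = mu0 := by
  funext i
  show ∑ᶠ y, 2 * Edel 2 2 1 i y = mu0 i
  rw [row_edel]; simp only [mu0]

lemma colS_tE21 : colS tE21 = lam0 := by
  funext j
  show ∑ᶠ x, 2 * Edel 2 2 1 x j = lam0 j
  rw [col_edel]; simp only [lam0]

lemma rowS_tE12 : rowS tE12 = lam0 := by
  funext i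
  show ∑ᶠ y, 2 * Edel 2 1 2 i y = lam0 i
  rw [row_edel]; simp only [lam0]

lemma colS_tE12 : colS tE12 = mu0 := by
  funext j
  show ∑ᶠ x, 2 * Edel 2 1 2 x j = mu0 j
  rw [col_edel]; simp only [mu0]

lemma icc12 : Finset.Icc (1 : ℤ) ((2:ℕ) : ℤ) = {1, 2} := by decide

lemma mem_theta_mat2 (p a q b : ℤ) : Mat2 p a q b ∈ ThetaAff 2 2 := by
  refine ⟨?_, ?_, ?_, ?_, ?_⟩
  · intro i j
    simp only [mat2_apply, Nat.cast_ofNat]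
    split_ifs <;> omega
  · intro i
    have h1 := support_row_edel 1 p a i
    have h2 := support_row_edel 1 q b i
    simp only [one_mul] at h1 h2
    exact (h1.union h2).subset (Function.support_add _ _)
  · intro j
    have h1 := support_col_edel 1 p a j
    have h2 := support_col_edel 1 q b j
    simp only [one_mul] at h1 h2
    exact (h1.union h2).subset (Function.support_add _ _)
  · rw [icc12, Finset.sum_insert (by decide), Finset.sum_singleton]
    simp only [rowS_mat2]
    split_ifs <;> omega
  · rw [icc12, Finset.sum_insert (by decide), Finset.sum_singleton]
    simp only [colS_mat2]
    split_ifs <;> omega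

lemma mem_theta_diag (l : ℤ → ℕ) (hper : ∀ i, l (i + 2) = l i) (hsum : l 1 + l 2 = 2) :
    diagM l ∈ ThetaAff 2 2 := by
  refine ⟨?_, ?_, ?_, ?_, ?_⟩
  · intro i j
    show diagM l (i + ((2:ℕ):ℤ)) (j + ((2:ℕ):ℤ)) = diagM l i j
    have h2 : ((2:ℕ):ℤ) = 2 := by norm_num
    rw [h2]
    simp only [diagM]
    by_cases h : i = j
    · subst h; rw [if_pos rfl, if_pos rfl, hper]
    · rw [if_neg (by omega), if_neg h]
  · intro i
    apply Set.Finite.subset (Set.finite_singleton i)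
    intro j hj
    simp only [Function.mem_support, diagM] at hj
    simp only [Set.mem_singleton_iff]
    by_contra hne
    exact hj (if_neg (fun h => hne h.symm))
  · intro j
    apply Set.Finite.subset (Set.finite_singleton j)
    intro i hi
    simp only [Function.mem_support, diagM] at hi
    simp only [Set.mem_singleton_iff]
    by_contra hne
    exact hi (if_neg hne)
  · rw [icc12, Finset.sum_insert (by decide), Finset.sum_singleton, rowS_diag]
    exact hsum
  · rw [icc12, Finset.sum_insert (by decide), Finset.sum_singleton, colS_diag]
    exact hsum

lemma lam0_per : ∀ i : ℤ, lam0 (i + 2) = lam0 i := by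
  intro i; simp only [lam0]; split_ifs <;> omega

lemma mu0_per : ∀ i : ℤ, mu0 (i + 2) = mu0 i := by
  intro i; simp only [mu0]; split_ifs <;> omega

lemma mem_theta_dl : diagM lam0 ∈ ThetaAff 2 2 :=
  mem_theta_diag lam0 lam0_per (by simp only [lam0]; split_ifs <;> omega)

lemma mem_theta_dm : diagM mu0 ∈ ThetaAff 2 2 :=
  mem_theta_diag mu0 mu0_per (by simp only [mu0]; split_ifs <;> omega)

lemma mem_theta_tE21 : tE21 ∈ ThetaAff 2 2 := by
  refine ⟨?_, fun i => support_row_edel 2 2 1 i, fun j => support_col_edel 2 2 1 j, ?_, ?_⟩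
  · intro i j
    simp only [tE21, edel_apply, Nat.cast_ofNat]
    split_ifs <;> omega
  · rw [icc12, Finset.sum_insert (by decide), Finset.sum_singleton, rowS_tE21]
    simp only [mu0]; split_ifs <;> omega
  · rw [icc12, Finset.sum_insert (by decide), Finset.sum_singleton, colS_tE21]
    simp only [lam0]; split_ifs <;> omega

lemma mem_theta_tE12 : tE12 ∈ ThetaAff 2 2 := by
  refine ⟨?_, fun i => support_row_edel 2 1 2 i, fun j => support_col_edel 2 1 2 j, ?_, ?_⟩
  · intro i j
    simp only [tE12, edel_apply, Nat.cast_ofNat]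
    split_ifs <;> omega
  · rw [icc12, Finset.sum_insert (by decide), Finset.sum_singleton, rowS_tE12]
    simp only [lam0]; split_ifs <;> omega
  · rw [icc12, Finset.sum_insert (by decide), Finset.sum_singleton, colS_tE12]
    simp only [mu0]; split_ifs <;> omega

lemma dnu_eq : diagM nu0 = Mat2 1 1 2 2 := by
  funext x y
  simp only [diagM, nu0, mat2_apply]
  split_ifs <;> omega

lemma mem_theta_dnu : diagM nu0 ∈ ThetaAff 2 2 := by
  rw [dnu_eq]; exact mem_theta_mat2 1 1 2 2

-- weights are distinct
lemma lam0_ne_nu0 : lam0 ≠ nu0 := by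
  intro h
  have := congrFun h 2
  simp only [lam0, nu0] at this
  split_ifs at this <;> omega

lemma mu0_ne_nu0 : mu0 ≠ nu0 := by
  intro h
  have := congrFun h 1
  simp only [mu0, nu0] at this
  split_ifs at this <;> omega

lemma lam0_ne_mu0 : lam0 ≠ mu0 := by
  intro h
  have := congrFun h 1
  simp only [lam0, mu0] at this
  split_ifs at this <;> omega

end PartB
section PartC
open Function

lemma per_iterate {f : ℤ → ℕ} (h : ∀ i, f (i + 2) = f i) : ∀ (k : ℤ) (i : ℤ), f (i + 2*k) = f i := by
  intro k
  induction k using Int.induction_on with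
  | zero => intro i; norm_num
  | succ n ih =>
      intro i
      have h1 : i + 2*((n:ℤ)+1) = (i + 2*n) + 2 := by ring
      rw [h1, h (i + 2*n), ih]
  | pred n ih =>
      intro i
      have h1 : i + 2*(-(n:ℤ)-1) + 2 = i + 2*(-(n:ℤ)) := by ring
      have := h (i + 2*(-(n:ℤ)-1))
      rw [h1] at this
      rw [← ih i, ← this]

lemma theta_per {A : ℤ → ℤ → ℕ} (hA : A ∈ ThetaAff 2 2) :
    ∀ (k : ℤ) (i j : ℤ), A (i + 2*k) (j + 2*k) = A i j := by
  have h2 : ∀ i j, A (i + 2) (j + 2) = A i j := by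
    intro i j
    have := hA.1 i j
    have hc : ((2:ℕ):ℤ) = 2 := by norm_num
    rw [hc] at this
    exact this
  intro k
  induction k using Int.induction_on with
  | zero => intro i j; norm_num
  | succ n ih =>
      intro i j
      have h1 : i + 2*((n:ℤ)+1) = (i + 2*n) + 2 := by ring
      have h1' : j + 2*((n:ℤ)+1) = (j + 2*n) + 2 := by ring
      rw [h1, h1', h2 (i + 2*n) (j + 2*n), ih]
  | pred n ih =>
      intro i j
      have h1 : i + 2*(-(n:ℤ)-1) + 2 = i + 2*(-(n:ℤ)) := by ring
      have h1' : j + 2*(-(n:ℤ)-1) + 2 = j + 2*(-(n:ℤ)) := by ring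
      have := h2 (i + 2*(-(n:ℤ)-1)) (j + 2*(-(n:ℤ)-1))
      rw [h1, h1'] at this
      rw [← ih i j, ← this]

lemma rowS_per {A : ℤ → ℤ → ℕ} (hA : A ∈ ThetaAff 2 2) (i : ℤ) :
    rowS A (i + 2) = rowS A i := by
  show ∑ᶠ j, A (i+2) j = ∑ᶠ j, A i j
  have h1 : ∑ᶠ j, A (i+2) (j+2) = ∑ᶠ j, A (i+2) j :=
    finsum_comp_equiv (Equiv.addRight (2:ℤ))
  rw [← h1]
  congr 1
  funext j
  have := theta_per hA 1 i j
  norm_num at this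
  exact this

lemma colS_per {A : ℤ → ℤ → ℕ} (hA : A ∈ ThetaAff 2 2) (j : ℤ) :
    colS A (j + 2) = colS A j := by
  show ∑ᶠ i, A i (j+2) = ∑ᶠ i, A i j
  have h1 : ∑ᶠ i, A (i+2) (j+2) = ∑ᶠ i, A i (j+2) :=
    finsum_comp_equiv (Equiv.addRight (2:ℤ)) (f := fun i => A i (j+2))
  rw [← h1]
  congr 1
  funext i
  have := theta_per hA 1 i j
  norm_num at this
  exact this

lemma row_sum_two {A : ℤ → ℤ → ℕ} (hA : A ∈ ThetaAff 2 2) : rowS A 1 + rowS A 2 = 2 := by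
  have := hA.2.2.2.1
  rw [icc12, Finset.sum_insert (by decide), Finset.sum_singleton] at this
  exact this

lemma col_sum_two {A : ℤ → ℤ → ℕ} (hA : A ∈ ThetaAff 2 2) : colS A 1 + colS A 2 = 2 := by
  have := hA.2.2.2.2
  rw [icc12, Finset.sum_insert (by decide), Finset.sum_singleton] at this
  exact this

lemma wt_trichotomy {f : ℤ → ℕ} (hper : ∀ i, f (i + 2) = f i) (hsum : f 1 + f 2 = 2) :
    f = lam0 ∨ f = mu0 ∨ f = nu0 := by
  have hall := per_iterate hper
  have key : ∀ i : ℤ, f i = if (2:ℤ) ∣ (i - 1) then f 1 else f 2 := by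
    intro i
    by_cases h : (2:ℤ) ∣ (i - 1)
    · obtain ⟨k, hk⟩ := h
      rw [if_pos ⟨k, hk⟩, show i = 1 + 2*k by omega, hall]
    · have h' : (2:ℤ) ∣ (i - 2) := by omega
      obtain ⟨k, hk⟩ := h'
      rw [if_neg h, show i = 2 + 2*k by omega, hall]
  have h1 : f 1 = 0 ∨ f 1 = 1 ∨ f 1 = 2 := by omega
  rcases h1 with h1 | h1 | h1
  · right; left
    funext i
    rw [key i]
    simp only [mu0]
    split_ifs <;> omega
  · right; right
    funext i
    rw [key i]
    simp only [nu0]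
    split_ifs <;> omega
  · left
    funext i
    rw [key i]
    simp only [lam0]
    split_ifs <;> omega

lemma wt_row {A : ℤ → ℤ → ℕ} (hA : A ∈ ThetaAff 2 2) :
    rowS A = lam0 ∨ rowS A = mu0 ∨ rowS A = nu0 :=
  wt_trichotomy (rowS_per hA) (row_sum_two hA)

lemma wt_col {A : ℤ → ℤ → ℕ} (hA : A ∈ ThetaAff 2 2) :
    colS A = lam0 ∨ colS A = mu0 ∨ colS A = nu0 :=
  wt_trichotomy (colS_per hA) (col_sum_two hA)

-- characterization of finitely-supported ℕ-functions with small sums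
lemma eq_zero_of_sum_zero {f : ℤ → ℕ} (hf : (support f).Finite) (h : ∑ᶠ u, f u = 0) :
    ∀ u, f u = 0 := by
  intro u
  by_contra hu
  have hmem : u ∈ hf.toFinset := by simp [hu]
  have hle : f u ≤ ∑ x ∈ hf.toFinset, f x := Finset.single_le_sum (fun _ _ => Nat.zero_le _) hmem
  rw [← finsum_eq_sum f hf, h] at hle
  omega

lemma sum_ge_of_mem {f : ℤ → ℕ} (hf : (support f).Finite) (u : ℤ) :
    f u ≤ ∑ᶠ x, f x := by
  by_cases hu : f u = 0
  · omega
  · have hmem : u ∈ hf.toFinset := by simp [hu]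
    have hle : f u ≤ ∑ x ∈ hf.toFinset, f x := Finset.single_le_sum (fun _ _ => Nat.zero_le _) hmem
    rw [← finsum_eq_sum f hf] at hle
    exact hle

lemma sum_ge_pair {f : ℤ → ℕ} (hf : (support f).Finite) {u v : ℤ} (huv : u ≠ v) :
    f u + f v ≤ ∑ᶠ x, f x := by
  by_cases hu : f u = 0
  · rw [hu, zero_add]; exact sum_ge_of_mem hf v
  by_cases hv : f v = 0
  · rw [hv, add_zero]; exact sum_ge_of_mem hf u
  have hmu : u ∈ hf.toFinset := by simp [hu]
  have hmv : v ∈ hf.toFinset := by simp [hv]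
  have hsub : {u, v} ⊆ hf.toFinset := by
    intro x hx
    simp only [Finset.mem_insert, Finset.mem_singleton] at hx
    rcases hx with rfl | rfl <;> assumption
  have := Finset.sum_le_sum_of_subset (f := f) hsub
  rw [Finset.sum_insert (by simpa using huv), Finset.sum_singleton, ← finsum_eq_sum f hf] at this
  exact this

lemma eq_delta_of_sum_one {f : ℤ → ℕ} (hf : (support f).Finite) (h1 : ∑ᶠ u, f u = 1) :
    ∃ a, f = fun u => if u = a then 1 else 0 := by
  have hne : ∃ a, f a ≠ 0 := by
    by_contra hz
    push_neg at hz
    rw [finsum_eq_zero_of_forall_eq_zero hz] at h1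
    omega
  obtain ⟨a, ha⟩ := hne
  refine ⟨a, ?_⟩
  funext u
  by_cases hu : u = a
  · subst hu
    rw [if_pos rfl]
    have := sum_ge_of_mem hf u
    omega
  · rw [if_neg hu]
    have := sum_ge_pair hf (show u ≠ a from hu)
    omega

lemma eq_delta2_of_sum_two {f : ℤ → ℕ} (hf : (support f).Finite) (h2 : ∑ᶠ u, f u = 2) :
    ∃ a b, f = fun u => (if u = a then 1 else 0) + (if u = b then 1 else 0) := by
  have hne : ∃ a, f a ≠ 0 := by
    by_contra hz
    push_neg at hz
    rw [finsum_eq_zero_of_forall_eq_zero hz] at h2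
    omega
  obtain ⟨a, ha⟩ := hne
  have hfg : f = fun u => (if u = a then 1 else 0) + (if u = a then f u - 1 else f u) := by
    funext u
    by_cases hu : u = a
    · subst hu; rw [if_pos rfl, if_pos rfl]; omega
    · rw [if_neg hu, if_neg hu]; omega
  set g : ℤ → ℕ := fun u => if u = a then f u - 1 else f u with hg
  have hgs : (support g).Finite := by
    apply hf.subset
    intro u hu
    simp only [mem_support, hg] at hu ⊢
    split_ifs at hu <;> omega
  have hsum : ∑ᶠ u, g u = 1 := by
    have hd : (support fun u => if u = a then (1:ℕ) else 0).Finite := by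
      apply (Set.finite_singleton a).subset
      intro u hu
      simp only [mem_support] at hu
      by_contra hne
      simp only [Set.mem_singleton_iff] at hne
      exact hu (if_neg hne)
    have := finsum_add_distrib hd hgs
    rw [← hfg] at this
    rw [h2] at this
    have hone : ∑ᶠ u : ℤ, (if u = a then (1:ℕ) else 0) = 1 := by
      rw [finsum_eq_single _ a]
      · simp
      · intro x hx; rw [if_neg hx]
    omega
  obtain ⟨b, hb⟩ := eq_delta_of_sum_one hgs hsum
  refine ⟨a, b, ?_⟩
  rw [hfg]
  funext u
  congr 1
  exact congrFun hb u

end PartC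
section PartD
open Function

lemma class_row_nu {A : ℤ → ℤ → ℕ} (hA : A ∈ ThetaAff 2 2) (h : rowS A = nu0) :
    ∃ a b, A = Mat2 1 a 2 b := by
  have h1 : ∑ᶠ j, A 1 j = 1 := by
    have := congrFun h 1; simpa [nu0, rowS] using this
  have h2 : ∑ᶠ j, A 2 j = 1 := by
    have := congrFun h 2; simpa [nu0, rowS] using this
  obtain ⟨a, ha⟩ := eq_delta_of_sum_one (hA.2.1 1) h1
  obtain ⟨b, hb⟩ := eq_delta_of_sum_one (hA.2.1 2) h2
  refine ⟨a, b, ?_⟩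
  funext x y
  have hper := theta_per hA
  rcases Int.even_or_odd x with ⟨k, hk⟩ | ⟨k, hk⟩
  · -- x = 2k even
    have hx : A x y = A 2 (y - 2*(k-1)) := by
      have := hper (k-1) 2 (y - 2*(k-1))
      rw [show (2:ℤ) + 2*(k-1) = x by omega, show y - 2*(k-1) + 2*(k-1) = y by ring] at this
      exact this
    rw [hx, congrFun hb (y - 2*(k-1)), mat2_apply]
    split_ifs <;> omega
  · -- x = 2k+1 odd
    have hx : A x y = A 1 (y - 2*k) := by
      have := hper k 1 (y - 2*k)
      rw [show (1:ℤ) + 2*k = x by omega, show y - 2*k + 2*k = y by ring] at this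
      exact this
    rw [hx, congrFun ha (y - 2*k), mat2_apply]
    split_ifs <;> omega

lemma class_row_lam {A : ℤ → ℤ → ℕ} (hA : A ∈ ThetaAff 2 2) (h : rowS A = lam0) :
    ∃ a b, A = Mat2 1 a 1 b := by
  have h1 : ∑ᶠ j, A 1 j = 2 := by
    have := congrFun h 1; simp only [rowS, lam0] at this; rw [this]; norm_num
  have h2 : ∑ᶠ j, A 2 j = 0 := by
    have := congrFun h 2; simp only [rowS, lam0] at this; rw [this]
    rw [if_neg (by omega)]
  obtain ⟨a, b, hab⟩ := eq_delta2_of_sum_two (hA.2.1 1) h1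
  have hz := eq_zero_of_sum_zero (hA.2.1 2) h2
  refine ⟨a, b, ?_⟩
  funext x y
  have hper := theta_per hA
  rcases Int.even_or_odd x with ⟨k, hk⟩ | ⟨k, hk⟩
  · have hx : A x y = A 2 (y - 2*(k-1)) := by
      have := hper (k-1) 2 (y - 2*(k-1))
      rw [show (2:ℤ) + 2*(k-1) = x by omega, show y - 2*(k-1) + 2*(k-1) = y by ring] at this
      exact this
    rw [hx, hz (y - 2*(k-1)), mat2_apply]
    split_ifs <;> omega
  · have hx : A x y = A 1 (y - 2*k) := by
      have := hper k 1 (y - 2*k)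
      rw [show (1:ℤ) + 2*k = x by omega, show y - 2*k + 2*k = y by ring] at this
      exact this
    rw [hx, congrFun hab (y - 2*k), mat2_apply]
    split_ifs <;> omega

lemma class_row_mu {A : ℤ → ℤ → ℕ} (hA : A ∈ ThetaAff 2 2) (h : rowS A = mu0) :
    ∃ a b, A = Mat2 2 a 2 b := by
  have h2 : ∑ᶠ j, A 2 j = 2 := by
    have := congrFun h 2; simp only [rowS, mu0] at this; rw [this]; norm_num
  have h1 : ∑ᶠ j, A 1 j = 0 := by
    have := congrFun h 1; simp only [rowS, mu0] at this; rw [this]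
    rw [if_neg (by omega)]
  obtain ⟨a, b, hab⟩ := eq_delta2_of_sum_two (hA.2.1 2) h2
  have hz := eq_zero_of_sum_zero (hA.2.1 1) h1
  refine ⟨a, b, ?_⟩
  funext x y
  have hper := theta_per hA
  rcases Int.even_or_odd x with ⟨k, hk⟩ | ⟨k, hk⟩
  · have hx : A x y = A 2 (y - 2*(k-1)) := by
      have := hper (k-1) 2 (y - 2*(k-1))
      rw [show (2:ℤ) + 2*(k-1) = x by omega, show y - 2*(k-1) + 2*(k-1) = y by ring] at this
      exact this
    rw [hx, congrFun hab (y - 2*(k-1)), mat2_apply]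
    split_ifs <;> omega
  · have hx : A x y = A 1 (y - 2*k) := by
      have := hper k 1 (y - 2*k)
      rw [show (1:ℤ) + 2*k = x by omega, show y - 2*k + 2*k = y by ring] at this
      exact this
    rw [hx, hz (y - 2*k), mat2_apply]
    split_ifs <;> omega

-- parity extraction from column weights
lemma parity_of_colS_nu {p a q b : ℤ} (h : colS (Mat2 p a q b) = nu0) : ¬ (2:ℤ) ∣ (a + b) := by
  have := congrFun h a
  rw [colS_mat2] at this
  simp only [nu0] at this
  split_ifs at this <;> omega

lemma parity_of_colS_lam {p a q b : ℤ} (h : colS (Mat2 p a q b) = lam0) :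
    (2:ℤ) ∣ (a - 1) ∧ (2:ℤ) ∣ (b - 1) := by
  have h1 := congrFun h a
  have h2 := congrFun h b
  rw [colS_mat2] at h1 h2
  simp only [lam0] at h1 h2
  split_ifs at h1 h2 <;> omega

lemma parity_of_colS_mu {p a q b : ℤ} (h : colS (Mat2 p a q b) = mu0) :
    (2:ℤ) ∣ a ∧ (2:ℤ) ∣ b := by
  have h1 := congrFun h a
  have h2 := congrFun h b
  rw [colS_mat2] at h1 h2
  simp only [mu0] at h1 h2
  split_ifs at h1 h2 <;> omega

-- injectivity of the normal form
lemma mat2_inj {a b a' b' : ℤ} (h : Mat2 1 a 2 b = Mat2 1 a' 2 b') : a = a' ∧ b = b' := by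
  constructor
  · have := congrFun (congrFun h 1) a
    rw [mat2_apply, mat2_apply] at this
    split_ifs at this <;> omega
  · have := congrFun (congrFun h 2) b
    rw [mat2_apply, mat2_apply] at this
    split_ifs at this <;> omega

end PartD
section PartE
open Function

def dta (p : ℤ) : ℤ → ℕ := fun u => if u = p then 1 else 0
def dta2 (p : ℤ) : ℤ → ℕ := fun u => if u = p then 2 else 0

lemma dta_ne {p q : ℤ} (h : p ≠ q) : dta p ≠ dta q := by
  intro he
  have := congrFun he p
  simp [dta, h] at this

lemma tset_one (g : ℤ → ℕ) (p : ℤ) (hp : g p = 1) (h0 : ∀ u, u ≠ p → g u = 0) :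
    {t | t ∈ CompInf 1 ∧ ∀ u, t u ≤ g u} = {dta p} := by
  ext t
  simp only [Set.mem_setOf_eq, Set.mem_singleton_iff]
  constructor
  · rintro ⟨⟨hfin, hsum⟩, hle⟩
    have hz : ∀ u, u ≠ p → t u = 0 := by
      intro u hu
      have := hle u
      rw [h0 u hu] at this
      omega
    have hs : ∑ᶠ u, t u = t p := finsum_eq_single _ p hz
    funext u
    by_cases h : u = p
    · subst h; simp only [dta]; norm_num; omega
    · simp only [dta, if_neg h]; exact hz u h
  · rintro rfl
    refine ⟨⟨(Set.finite_singleton p).subset ?_, ?_⟩, ?_⟩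
    · intro u hu
      simp only [mem_support, dta] at hu
      simp only [Set.mem_singleton_iff]
      by_contra h
      exact hu (if_neg h)
    · rw [finsum_eq_single _ p (fun x hx => by simp [dta, hx])]
      simp [dta]
    · intro u
      by_cases h : u = p
      · subst h; simp [dta, hp]
      · simp [dta, h]

lemma tset_two (g : ℤ → ℕ) (p : ℤ) (hp : g p = 2) (h0 : ∀ u, u ≠ p → g u = 0) :
    {t | t ∈ CompInf 2 ∧ ∀ u, t u ≤ g u} = {dta2 p} := by
  ext t
  simp only [Set.mem_setOf_eq, Set.mem_singleton_iff]
  constructor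
  · rintro ⟨⟨hfin, hsum⟩, hle⟩
    have hz : ∀ u, u ≠ p → t u = 0 := by
      intro u hu
      have := hle u
      rw [h0 u hu] at this
      omega
    have hs : ∑ᶠ u, t u = t p := finsum_eq_single _ p hz
    funext u
    by_cases h : u = p
    · subst h; simp only [dta2]; norm_num; omega
    · simp only [dta2, if_neg h]; exact hz u h
  · rintro rfl
    refine ⟨⟨(Set.finite_singleton p).subset ?_, ?_⟩, ?_⟩
    · intro u hu
      simp only [mem_support, dta2] at hu
      simp only [Set.mem_singleton_iff]
      by_contra h
      exact hu (if_neg h)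
    · rw [finsum_eq_single _ p (fun x hx => by simp [dta2, hx])]
      simp [dta2]
    · intro u
      by_cases h : u = p
      · subst h; simp [dta2, hp]
      · simp [dta2, h]

lemma tset_pair (g : ℤ → ℕ) (p q : ℤ) (hpq : p ≠ q) (hp : g p = 1) (hq : g q = 1)
    (h0 : ∀ u, u ≠ p → u ≠ q → g u = 0) :
    {t | t ∈ CompInf 1 ∧ ∀ u, t u ≤ g u} = {dta p, dta q} := by
  ext t
  simp only [Set.mem_setOf_eq, Set.mem_insert_iff, Set.mem_singleton_iff]
  constructor
  · rintro ⟨⟨hfin, hsum⟩, hle⟩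
    have hz : ∀ u, u ≠ p → u ≠ q → t u = 0 := by
      intro u hu hu'
      have := hle u
      rw [h0 u hu hu'] at this
      omega
    have hs : t p + t q = 1 := by
      have hsub : ∑ᶠ u, t u = t p + t q := by
        have heq : t = fun u => (if u = p then t p else 0) + (if u = q then t q else 0) := by
          funext u
          by_cases h1 : u = p
          · subst h1; rw [if_pos rfl, if_neg hpq]; omega
          · by_cases h2 : u = q
            · subst h2; rw [if_neg h1, if_pos rfl]; omega
            · rw [if_neg h1, if_neg h2, hz u h1 h2]
        have hd1 : (support fun u => if u = p then t p else 0).Finite := by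
          apply (Set.finite_singleton p).subset
          intro u hu
          simp only [mem_support] at hu
          simp only [Set.mem_singleton_iff]
          by_contra h
          exact hu (if_neg h)
        have hd2 : (support fun u => if u = q then t q else 0).Finite := by
          apply (Set.finite_singleton q).subset
          intro u hu
          simp only [mem_support] at hu
          simp only [Set.mem_singleton_iff]
          by_contra h
          exact hu (if_neg h)
        conv_lhs => rw [heq]
        rw [finsum_add_distrib hd1 hd2,
          finsum_eq_single (fun u => if u = p then t p else 0) p (fun x hx => if_neg hx),
          finsum_eq_single (fun u => if u = q then t q else 0) q (fun x hx => if_neg hx)]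
        norm_num
      rw [hsub] at hsum
      exact hsum
    rcases Nat.eq_zero_or_pos (t p) with h1 | h1
    · right
      funext u
      by_cases h : u = q
      · subst h; simp only [dta]; norm_num; omega
      · simp only [dta, if_neg h]
        by_cases h' : u = p
        · subst h'; omega
        · exact hz u h' h
    · left
      funext u
      by_cases h : u = p
      · subst h; simp only [dta]; norm_num; omega
      · simp only [dta, if_neg h]
        by_cases h' : u = q
        · subst h'; omega
        · exact hz u h h'
  · rintro (rfl | rfl)
    · refine ⟨⟨(Set.finite_singleton p).subset ?_, ?_⟩, ?_⟩
      · intro u hu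
        simp only [mem_support, dta] at hu
        simp only [Set.mem_singleton_iff]
        by_contra h
        exact hu (if_neg h)
      · rw [finsum_eq_single _ p (fun x hx => by simp [dta, hx])]
        simp [dta]
      · intro u
        by_cases h : u = p
        · subst h; simp [dta, hp]
        · simp [dta, h]
    · refine ⟨⟨(Set.finite_singleton q).subset ?_, ?_⟩, ?_⟩
      · intro u hu
        simp only [mem_support, dta] at hu
        simp only [Set.mem_singleton_iff]
        by_contra h
        exact hu (if_neg h)
      · rw [finsum_eq_single _ q (fun x hx => by simp [dta, hx])]
        simp [dta]
      · intro u
        by_cases h : u = q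
        · subst h; simp [dta, hq]
        · simp [dta, h]

end PartE
section PartF
open Function LaurentPolynomial

def isSurv (A : ℤ → ℤ → ℕ) : Prop :=
  ∃ p : ℤ × ℤ, A = Mat2 1 p.1 2 p.2 ∧ ¬ (2:ℤ) ∣ (p.1 + p.2)

open Classical in
noncomputable def valL (A : ℤ → ℤ → ℕ) : LaurentPolynomial ℚ :=
  if h : isSurv A then
    LaurentPolynomial.C (if (2:ℤ) ∣ (h.choose.1 - 1) then 1 else -1) *
      LaurentPolynomial.T ((h.choose.1 + h.choose.2 - 3) / 2)
  else 0

lemma valL_mat2 {a b : ℤ} (h : ¬ (2:ℤ) ∣ (a + b)) :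
    valL (Mat2 1 a 2 b) =
      LaurentPolynomial.C (if (2:ℤ) ∣ (a - 1) then 1 else -1) *
        LaurentPolynomial.T ((a + b - 3) / 2) := by
  have hs : isSurv (Mat2 1 a 2 b) := ⟨(a, b), rfl, h⟩
  classical
  simp only [valL]
  rw [dif_pos hs]
  obtain ⟨h1, h2⟩ := mat2_inj hs.choose_spec.1
  rw [← h1, ← h2]

lemma valL_zero_of_not {A : ℤ → ℤ → ℕ} (h : ¬ isSurv A) : valL A = 0 := by
  classical
  simp only [valL]
  rw [dif_neg h]

lemma surv_row {A : ℤ → ℤ → ℕ} (h : isSurv A) : rowS A = nu0 := by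
  obtain ⟨⟨a, b⟩, rfl, hp⟩ := h
  exact rowS_mat2_nu a b

lemma surv_col {A : ℤ → ℤ → ℕ} (h : isSurv A) : colS A = nu0 := by
  obtain ⟨⟨a, b⟩, rfl, hp⟩ := h
  exact colS_mat2_nu 1 2 hp

lemma not_surv_parity {a b : ℤ} (h : (2:ℤ) ∣ (a + b)) : ¬ isSurv (Mat2 1 a 2 b) := by
  rintro ⟨⟨a', b'⟩, heq, hp⟩
  obtain ⟨rfl, rfl⟩ := mat2_inj heq
  exact hp h

lemma neg_one_zpow_even {n : ℤ} (h : (2:ℤ) ∣ n) : ((-1:ℚ)) ^ n = 1 := by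
  obtain ⟨k, rfl⟩ := h
  rw [zpow_mul]
  norm_num

lemma neg_one_zpow_odd {n : ℤ} (h : ¬ (2:ℤ) ∣ n) : ((-1:ℚ)) ^ n = -1 := by
  have h' : (2:ℤ) ∣ (n - 1) := by omega
  obtain ⟨k, hk⟩ := h'
  rw [show n = 2*k + 1 by omega, zpow_add₀ (by norm_num : (-1:ℚ) ≠ 0), zpow_mul]
  norm_num

lemma T_mul_T (k l : ℤ) : (LaurentPolynomial.T k : LaurentPolynomial ℚ) * T l = T (k + l) :=
  (T_add k l).symm

end PartF
section PartG
open Function LaurentPolynomial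

variable {S : Type} [Ring S] [Algebra ℚ S] (H : AffineSchur22 S)

/-- The two-sided ideal generated by `e_λ`, as a `ℚ`-submodule span. -/
def Isp : Submodule ℚ S :=
  Submodule.span ℚ {y : S | ∃ a b : S, y = a * H.e (diagM lam0) * b}

lemma mem_Isp_gen (a b : S) : a * H.e (diagM lam0) * b ∈ Isp H :=
  Submodule.subset_span ⟨a, b, rfl⟩

lemma top_induction (p : S → Prop) (he : ∀ A ∈ ThetaAff 2 2, p (H.e A)) (h0 : p 0)
    (hadd : ∀ x y, p x → p y → p (x + y)) (hsmul : ∀ (c : ℚ) (x : S), p x → p (c • x)) :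
    ∀ x : S, p x := by
  intro x
  have hx : x ∈ Submodule.span ℚ (H.e '' ThetaAff 2 2) := by
    rw [H.span_eq_top]; trivial
  refine Submodule.span_induction ?_ h0 (fun a b _ _ ha hb => hadd a b ha hb)
    (fun c a _ ha => hsmul c a ha) hx
  rintro y ⟨A, hA, rfl⟩
  exact he A hA

lemma Isp_mul_left (x : S) {z : S} (hz : z ∈ Isp H) : x * z ∈ Isp H := by
  refine Submodule.span_induction ?_ ?_ ?_ ?_ hz
  · rintro y ⟨a, b, rfl⟩
    have : x * (a * H.e (diagM lam0) * b) = (x * a) * H.e (diagM lam0) * b := by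
      rw [← mul_assoc, ← mul_assoc]
    rw [this]
    exact mem_Isp_gen H _ _
  · rw [mul_zero]; exact Submodule.zero_mem _
  · intro a b _ _ ha hb
    rw [mul_add]; exact Submodule.add_mem _ ha hb
  · intro c a _ ha
    rw [mul_smul_comm]; exact Submodule.smul_mem _ _ ha

lemma Isp_mul_right {z : S} (hz : z ∈ Isp H) (x : S) : z * x ∈ Isp H := by
  refine Submodule.span_induction ?_ ?_ ?_ ?_ hz
  · rintro y ⟨a, b, rfl⟩
    have : (a * H.e (diagM lam0) * b) * x = a * H.e (diagM lam0) * (b * x) := by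
      rw [mul_assoc]
    rw [this]
    exact mem_Isp_gen H _ _
  · rw [zero_mul]; exact Submodule.zero_mem _
  · intro a b _ _ ha hb
    rw [add_mul]; exact Submodule.add_mem _ ha hb
  · intro c a _ ha
    rw [smul_mul_assoc]; exact Submodule.smul_mem _ _ ha

/-- the basis of `S` indexed by `Θ△(2,2)`. -/
noncomputable def bas : Module.Basis (ThetaAff 2 2) ℚ S :=
  Module.Basis.mk H.indep
    (by
      have hr : Set.range (fun A : ThetaAff 2 2 => H.e A.1) = H.e '' ThetaAff 2 2 := by
        ext s
        constructor
        · rintro ⟨⟨A, hA⟩, rfl⟩; exact ⟨A, hA, rfl⟩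
        · rintro ⟨A, hA, rfl⟩; exact ⟨⟨A, hA⟩, rfl⟩
      rw [hr, H.span_eq_top])

noncomputable def piL : S →ₗ[ℚ] LaurentPolynomial ℚ :=
  (bas H).constr ℚ (fun A => valL A.1)

lemma piL_e (A : ℤ → ℤ → ℕ) : piL H (H.e A) = valL A := by
  by_cases hA : A ∈ ThetaAff 2 2
  · have h1 : H.e A = bas H ⟨A, hA⟩ := (Module.Basis.mk_apply H.indep _ ⟨A, hA⟩).symm
    rw [h1, piL, Module.Basis.constr_basis]
  · rw [H.vanish A hA, map_zero]
    symm
    apply valL_zero_of_not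
    intro hs
    obtain ⟨⟨a, b⟩, rfl, hp⟩ := hs
    exact hA (mem_theta_mat2 1 a 2 b)

noncomputable def phiL : LaurentPolynomial ℚ →ₗ[ℚ] S :=
  Finsupp.lsum ℚ (fun k => LinearMap.toSpanSingleton ℚ S (H.e (Mat2 1 (1 + 2*k) 2 2)))
    ∘ₗ (AddMonoidAlgebra.coeffLinearEquiv ℚ).toLinearMap

lemma phiL_single (k : ℤ) (c : ℚ) :
    phiL H (AddMonoidAlgebra.single k c) = c • H.e (Mat2 1 (1 + 2*k) 2 2) := by
  rw [phiL, LinearMap.comp_apply]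
  erw [Finsupp.lsum_single]
  rw [LinearMap.toSpanSingleton_apply]

lemma valL_NF (k : ℤ) : valL (Mat2 1 (1 + 2*k) 2 2) = LaurentPolynomial.T k := by
  rw [valL_mat2 (by omega)]
  rw [if_pos (by omega), show (1 + 2*k + 2 - 3)/2 = k by omega]
  simp

lemma piL_phiL (p : LaurentPolynomial ℚ) : piL H (phiL H p) = p := by
  induction p using AddMonoidAlgebra.induction_linear with
  | zero => rw [map_zero, map_zero]
  | add f g hf hg => rw [map_add, map_add, hf, hg]
  | single k c =>
      rw [phiL_single, map_smul, piL_e, valL_NF]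
      rw [show (LaurentPolynomial.T k : LaurentPolynomial ℚ) = AddMonoidAlgebra.single k (1:ℚ) from rfl]
      rw [AddMonoidAlgebra.smul_single, smul_eq_mul, mul_one]

end PartG
section PartH
open Function LaurentPolynomial

variable {S : Type} [Ring S] [Algebra ℚ S] (H : AffineSchur22 S)

lemma app1 : H.e tE21 * H.e (diagM lam0) = H.e tE21 := by
  have h := H.lusztig_row_minus 1 2 (diagM lam0) mem_theta_dl
    (by rw [rowS_diag]; simp only [lam0]; norm_num)
  simp only [rowS_diag] at h
  rw [show (fun x y => diagM lam0 x y - 2 * Edel 2 1 1 x y + 2 * Edel 2 (1+1) 1 x y) = tE21 by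
    funext x y
    simp only [diagM, lam0, edel_apply, tE21, mul_ite, mul_one, mul_zero]
    split_ifs <;> omega] at h
  rw [tset_two (diagM lam0 1) 1 (by simp [diagM, lam0])
    (fun u hu => by simp [diagM, Ne.symm hu])] at h
  rw [finsum_mem_singleton] at h
  rw [show (∏ᶠ u, Nat.choose (diagM lam0 (1+1) u + dta2 1 u) (dta2 1 u)) = 1 from
    finprod_eq_one_of_forall_eq_one (fun u => by
      by_cases hu : u = 1
      · subst hu; simp [diagM, lam0, dta2]
      · simp [dta2, hu])] at h
  rw [show rowSub 2 1 (dta2 1) (diagM lam0) = tE21 by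
    funext x y
    simp only [rowSub, diagM, lam0, dta2, tE21, edel_apply, Nat.cast_ofNat, mul_ite, mul_one,
      mul_zero]
    split_ifs <;> omega] at h
  rw [h]
  norm_num

lemma app2 : H.e tE21 * H.e tE12 = H.e (diagM mu0) := by
  have h := H.lusztig_col_plus 1 2 tE21 mem_theta_tE21
    (by rw [colS_tE21]; simp only [lam0]; norm_num)
  simp only [colS_tE21] at h
  rw [show (fun x y => diagM lam0 x y + 2 * Edel 2 1 (1+1) x y - 2 * Edel 2 1 1 x y) = tE12 by
    funext x y
    simp only [diagM, lam0, edel_apply, tE12, mul_ite, mul_one, mul_zero]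
    split_ifs <;> omega] at h
  rw [tset_two (fun u => tE21 u 1) 2
    (by simp [tE21, edel_apply])
    (fun u hu => by
      simp only [tE21, edel_apply, mul_ite, mul_one, mul_zero]
      rw [if_neg]
      rintro ⟨h1, -⟩
      omega)] at h
  rw [finsum_mem_singleton] at h
  rw [show (∏ᶠ u, Nat.choose (tE21 u (1+1) + dta2 2 u) (dta2 2 u)) = 1 from
    finprod_eq_one_of_forall_eq_one (fun u => by
      by_cases hu : u = 2
      · subst hu
        simp only [tE21, edel_apply, dta2, if_pos rfl]
        norm_num
      · simp [dta2, hu])] at h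
  rw [show colAdd 2 1 (dta2 2) tE21 = diagM mu0 by
    funext x y
    simp only [colAdd, diagM, mu0, dta2, tE21, edel_apply, Nat.cast_ofNat, mul_ite, mul_one,
      mul_zero]
    split_ifs <;> omega] at h
  rw [h]
  norm_num

end PartH
section PartI
open Function LaurentPolynomial

variable {S : Type} [Ring S] [Algebra ℚ S] (H : AffineSchur22 S)

lemma app3 (k : ℤ) (hk : k ≠ 0) (c d : ℤ) :
    H.e (Mat2 1 (1 + 2*k) 2 2) * H.e (Mat2 1 c 2 d) = H.e (Mat2 1 (c + 2*k) 2 d) := by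
  have h := H.lusztig_shift 1 k hk (Mat2 1 c 2 d) (mem_theta_mat2 1 c 2 d)
    (by rw [rowS_mat2_nu]; simp [nu0])
  simp only [rowS_mat2_nu] at h
  rw [show (fun x y => diagM nu0 x y - Edel 2 1 1 x y + Edel 2 1 (1 + 2*k) x y)
      = Mat2 1 (1 + 2*k) 2 2 by
    funext x y
    simp only [diagM, nu0, edel_apply, mat2_apply]
    split_ifs <;> omega] at h
  rw [show {u : ℤ | 1 ≤ Mat2 1 c 2 d 1 u} = {c} by
    ext u
    simp only [Set.mem_setOf_eq, Set.mem_singleton_iff, mat2_apply]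
    split_ifs <;> omega] at h
  rw [finsum_mem_singleton] at h
  rw [show Mat2 1 c 2 d 1 (c + 2*k) = 0 by
    rw [mat2_apply]; split_ifs <;> omega] at h
  rw [show (fun x y => Mat2 1 c 2 d x y + Edel 2 1 (c + 2*k) x y - Edel 2 1 c x y)
      = Mat2 1 (c + 2*k) 2 d by
    funext x y
    simp only [mat2_apply, edel_apply]
    split_ifs <;> omega] at h
  rw [h]
  norm_num

lemma app4 (k : ℤ) (hk : k ≠ 0) (c d : ℤ) :
    H.e (Mat2 1 1 2 (2 + 2*k)) * H.e (Mat2 1 c 2 d) = H.e (Mat2 1 c 2 (d + 2*k)) := by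
  have h := H.lusztig_shift 2 k hk (Mat2 1 c 2 d) (mem_theta_mat2 1 c 2 d)
    (by rw [rowS_mat2_nu]; simp [nu0])
  simp only [rowS_mat2_nu] at h
  rw [show (fun x y => diagM nu0 x y - Edel 2 2 2 x y + Edel 2 2 (2 + 2*k) x y)
      = Mat2 1 1 2 (2 + 2*k) by
    funext x y
    simp only [diagM, nu0, edel_apply, mat2_apply]
    split_ifs <;> omega] at h
  rw [show {u : ℤ | 1 ≤ Mat2 1 c 2 d 2 u} = {d} by
    ext u
    simp only [Set.mem_setOf_eq, Set.mem_singleton_iff, mat2_apply]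
    split_ifs <;> omega] at h
  rw [finsum_mem_singleton] at h
  rw [show Mat2 1 c 2 d 2 (d + 2*k) = 0 by
    rw [mat2_apply]; split_ifs <;> omega] at h
  rw [show (fun x y => Mat2 1 c 2 d x y + Edel 2 2 (d + 2*k) x y - Edel 2 2 d x y)
      = Mat2 1 c 2 (d + 2*k) by
    funext x y
    simp only [mat2_apply, edel_apply]
    split_ifs <;> omega] at h
  rw [h]
  norm_num

lemma app5 (c d : ℤ) (hcd : c ≠ d) :
    H.e (Mat2 1 1 1 2) * H.e (Mat2 1 c 2 d) = H.e (Mat2 1 c 1 d) := by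
  have h := H.lusztig_row_plus 1 1 (Mat2 1 c 2 d) (mem_theta_mat2 1 c 2 d)
    (by rw [rowS_mat2_nu]; simp [nu0])
  simp only [rowS_mat2_nu] at h
  rw [show (fun x y => diagM nu0 x y + 1 * Edel 2 1 (1+1) x y - 1 * Edel 2 (1+1) (1+1) x y)
      = Mat2 1 1 1 2 by
    funext x y
    simp only [diagM, nu0, edel_apply, mat2_apply, one_mul]
    split_ifs <;> omega] at h
  rw [tset_one (fun u => Mat2 1 c 2 d (1+1) u) d
    (by simp only [mat2_apply]; split_ifs <;> omega)
    (fun u hu => by simp only [mat2_apply]; split_ifs <;> omega)] at h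
  rw [finsum_mem_singleton] at h
  rw [show (∏ᶠ u, Nat.choose (Mat2 1 c 2 d 1 u + dta d u) (dta d u)) = 1 from
    finprod_eq_one_of_forall_eq_one (fun u => by
      by_cases hu : u = d
      · rw [hu, show Mat2 1 c 2 d 1 (d) = 0 by simp only [mat2_apply]; split_ifs <;> omega]
        simp [dta]
      · simp [dta, hu])] at h
  rw [show rowAdd 2 1 (dta d) (Mat2 1 c 2 d) = Mat2 1 c 1 d by
    funext x y
    simp only [rowAdd, mat2_apply, dta, Nat.cast_ofNat]
    split_ifs <;> omega] at h
  rw [h]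
  norm_num

lemma app6 (c d : ℤ) (hcd : c ≠ d) :
    H.e (Mat2 2 1 2 2) * H.e (Mat2 1 c 2 d) = H.e (Mat2 2 c 2 d) := by
  have h := H.lusztig_row_minus 1 1 (Mat2 1 c 2 d) (mem_theta_mat2 1 c 2 d)
    (by rw [rowS_mat2_nu]; simp [nu0])
  simp only [rowS_mat2_nu] at h
  rw [show (fun x y => diagM nu0 x y - 1 * Edel 2 1 1 x y + 1 * Edel 2 (1+1) 1 x y)
      = Mat2 2 1 2 2 by
    funext x y
    simp only [diagM, nu0, edel_apply, mat2_apply, one_mul]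
    split_ifs <;> omega] at h
  rw [tset_one (fun u => Mat2 1 c 2 d 1 u) c
    (by simp only [mat2_apply]; split_ifs <;> omega)
    (fun u hu => by simp only [mat2_apply]; split_ifs <;> omega)] at h
  rw [finsum_mem_singleton] at h
  rw [show (∏ᶠ u, Nat.choose (Mat2 1 c 2 d (1+1) u + dta c u) (dta c u)) = 1 from
    finprod_eq_one_of_forall_eq_one (fun u => by
      by_cases hu : u = c
      · rw [hu, show Mat2 1 c 2 d (1+1) (c) = 0 by simp only [mat2_apply]; split_ifs <;> omega]
        simp [dta]
      · simp [dta, hu])] at h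
  rw [show rowSub 2 1 (dta c) (Mat2 1 c 2 d) = Mat2 2 c 2 d by
    funext x y
    simp only [rowSub, mat2_apply, dta, Nat.cast_ofNat]
    split_ifs <;> omega] at h
  rw [h]
  norm_num

lemma app7 (c d : ℤ) (hcd : c ≠ d) :
    H.e (Mat2 1 2 2 2) * H.e (Mat2 2 c 2 d)
      = H.e (Mat2 1 c 2 d) + H.e (Mat2 1 d 2 c) := by
  have h := H.lusztig_row_plus 1 1 (Mat2 2 c 2 d) (mem_theta_mat2 2 c 2 d)
    (by rw [rowS_mat2_mu]; simp only [mu0]; norm_num)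
  simp only [rowS_mat2_mu] at h
  rw [show (fun x y => diagM mu0 x y + 1 * Edel 2 1 (1+1) x y - 1 * Edel 2 (1+1) (1+1) x y)
      = Mat2 1 2 2 2 by
    funext x y
    simp only [diagM, mu0, edel_apply, mat2_apply, one_mul]
    split_ifs <;> omega] at h
  rw [tset_pair (fun u => Mat2 2 c 2 d (1+1) u) c d hcd
    (by simp only [mat2_apply]; split_ifs <;> omega)
    (by simp only [mat2_apply]; split_ifs <;> omega)
    (fun u hu hu' => by simp only [mat2_apply]; split_ifs <;> omega)] at h
  rw [finsum_mem_pair (dta_ne hcd)] at h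
  rw [show (∏ᶠ u, Nat.choose (Mat2 2 c 2 d 1 u + dta c u) (dta c u)) = 1 from
    finprod_eq_one_of_forall_eq_one (fun u => by
      by_cases hu : u = c
      · rw [hu, show Mat2 2 c 2 d 1 (c) = 0 by simp only [mat2_apply]; split_ifs <;> omega]
        simp [dta]
      · simp [dta, hu])] at h
  rw [show (∏ᶠ u, Nat.choose (Mat2 2 c 2 d 1 u + dta d u) (dta d u)) = 1 from
    finprod_eq_one_of_forall_eq_one (fun u => by
      by_cases hu : u = d
      · rw [hu, show Mat2 2 c 2 d 1 (d) = 0 by simp only [mat2_apply]; split_ifs <;> omega]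
        simp [dta]
      · simp [dta, hu])] at h
  rw [show rowAdd 2 1 (dta c) (Mat2 2 c 2 d) = Mat2 1 c 2 d by
    funext x y
    simp only [rowAdd, mat2_apply, dta, Nat.cast_ofNat]
    split_ifs <;> omega] at h
  rw [show rowAdd 2 1 (dta d) (Mat2 2 c 2 d) = Mat2 1 d 2 c by
    funext x y
    simp only [rowAdd, mat2_apply, dta, Nat.cast_ofNat]
    split_ifs <;> omega] at h
  rw [h]
  norm_num

lemma app8 (a b : ℤ) (ha : (2:ℤ) ∣ (a - 1)) (hb : (2:ℤ) ∣ (b - 1)) :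
    H.e (Mat2 1 a 2 b) * H.e (Mat2 1 1 1 2)
      = H.e (Mat2 1 (a+1) 2 b) + H.e (Mat2 1 a 2 (b+1)) := by
  have hcol : colS (Mat2 1 a 2 b) = lam0 := colS_mat2_lam 1 2 ha hb
  have h := H.lusztig_col_plus 1 1 (Mat2 1 a 2 b) (mem_theta_mat2 1 a 2 b)
    (by rw [hcol]; simp only [lam0]; norm_num)
  simp only [hcol] at h
  rw [show (fun x y => diagM lam0 x y + 1 * Edel 2 1 (1+1) x y - 1 * Edel 2 1 1 x y)
      = Mat2 1 1 1 2 by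
    funext x y
    simp only [diagM, lam0, edel_apply, mat2_apply, one_mul]
    split_ifs <;> omega] at h
  rw [tset_pair (fun u => Mat2 1 a 2 b u 1) (2-a) (3-b) (by omega)
    (by simp only [mat2_apply]; split_ifs <;> omega)
    (by simp only [mat2_apply]; split_ifs <;> omega)
    (fun u hu hu' => by simp only [mat2_apply]; split_ifs <;> omega)] at h
  rw [finsum_mem_pair (dta_ne (by omega))] at h
  rw [show (∏ᶠ u, Nat.choose (Mat2 1 a 2 b u (1+1) + dta (2-a) u) (dta (2-a) u)) = 1 from
    finprod_eq_one_of_forall_eq_one (fun u => by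
      by_cases hu : u = 2-a
      · rw [hu, show Mat2 1 a 2 b (2-a) (1+1) = 0 by simp only [mat2_apply]; split_ifs <;> omega]
        simp [dta]
      · simp [dta, hu])] at h
  rw [show (∏ᶠ u, Nat.choose (Mat2 1 a 2 b u (1+1) + dta (3-b) u) (dta (3-b) u)) = 1 from
    finprod_eq_one_of_forall_eq_one (fun u => by
      by_cases hu : u = 3-b
      · rw [hu, show Mat2 1 a 2 b (3-b) (1+1) = 0 by simp only [mat2_apply]; split_ifs <;> omega]
        simp [dta]
      · simp [dta, hu])] at h
  rw [show colAdd 2 1 (dta (2-a)) (Mat2 1 a 2 b) = Mat2 1 (a+1) 2 b by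
    funext x y
    simp only [colAdd, mat2_apply, dta, Nat.cast_ofNat]
    split_ifs <;> omega] at h
  rw [show colAdd 2 1 (dta (3-b)) (Mat2 1 a 2 b) = Mat2 1 a 2 (b+1) by
    funext x y
    simp only [colAdd, mat2_apply, dta, Nat.cast_ofNat]
    split_ifs <;> omega] at h
  rw [h]
  norm_num

lemma app9 (a b : ℤ) (ha : (2:ℤ) ∣ a) (hb : (2:ℤ) ∣ b) :
    H.e (Mat2 1 a 2 b) * H.e (Mat2 2 1 2 2)
      = H.e (Mat2 1 (a-1) 2 b) + H.e (Mat2 1 a 2 (b-1)) := by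
  have hcol : colS (Mat2 1 a 2 b) = mu0 := colS_mat2_mu 1 2 ha hb
  have h := H.lusztig_col_minus 1 1 (Mat2 1 a 2 b) (mem_theta_mat2 1 a 2 b)
    (by rw [hcol]; simp only [mu0]; norm_num)
  simp only [hcol] at h
  rw [show (fun x y => diagM mu0 x y - 1 * Edel 2 (1+1) (1+1) x y + 1 * Edel 2 (1+1) 1 x y)
      = Mat2 2 1 2 2 by
    funext x y
    simp only [diagM, mu0, edel_apply, mat2_apply, one_mul]
    split_ifs <;> omega] at h
  rw [tset_pair (fun u => Mat2 1 a 2 b u (1+1)) (3-a) (4-b) (by omega)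
    (by simp only [mat2_apply]; split_ifs <;> omega)
    (by simp only [mat2_apply]; split_ifs <;> omega)
    (fun u hu hu' => by simp only [mat2_apply]; split_ifs <;> omega)] at h
  rw [finsum_mem_pair (dta_ne (by omega))] at h
  rw [show (∏ᶠ u, Nat.choose (Mat2 1 a 2 b u 1 + dta (3-a) u) (dta (3-a) u)) = 1 from
    finprod_eq_one_of_forall_eq_one (fun u => by
      by_cases hu : u = 3-a
      · rw [hu, show Mat2 1 a 2 b (3-a) 1 = 0 by simp only [mat2_apply]; split_ifs <;> omega]
        simp [dta]
      · simp [dta, hu])] at h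
  rw [show (∏ᶠ u, Nat.choose (Mat2 1 a 2 b u 1 + dta (4-b) u) (dta (4-b) u)) = 1 from
    finprod_eq_one_of_forall_eq_one (fun u => by
      by_cases hu : u = 4-b
      · rw [hu, show Mat2 1 a 2 b (4-b) 1 = 0 by simp only [mat2_apply]; split_ifs <;> omega]
        simp [dta]
      · simp [dta, hu])] at h
  rw [show colSub 2 1 (dta (3-a)) (Mat2 1 a 2 b) = Mat2 1 (a-1) 2 b by
    funext x y
    simp only [colSub, mat2_apply, dta, Nat.cast_ofNat]
    split_ifs <;> omega] at h
  rw [show colSub 2 1 (dta (4-b)) (Mat2 1 a 2 b) = Mat2 1 a 2 (b-1) by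
    funext x y
    simp only [colSub, mat2_apply, dta, Nat.cast_ofNat]
    split_ifs <;> omega] at h
  rw [h]
  norm_num

lemma app10 (a b : ℤ) (ha : (2:ℤ) ∣ (a - 1)) (hb : (2:ℤ) ∣ (b - 1)) :
    H.e (Mat2 1 a 2 b) * H.e (Mat2 1 1 1 0)
      = H.e (Mat2 1 (a-1) 2 b) + H.e (Mat2 1 a 2 (b-1)) := by
  have hcol : colS (Mat2 1 a 2 b) = lam0 := colS_mat2_lam 1 2 ha hb
  have h := H.lusztig_col_minus 2 1 (Mat2 1 a 2 b) (mem_theta_mat2 1 a 2 b)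
    (by rw [hcol]; simp only [lam0]; rw [if_pos (by omega)]; omega)
  simp only [hcol] at h
  rw [show (fun x y => diagM lam0 x y - 1 * Edel 2 (2+1) (2+1) x y + 1 * Edel 2 (2+1) 2 x y)
      = Mat2 1 1 1 0 by
    funext x y
    simp only [diagM, lam0, edel_apply, mat2_apply, one_mul]
    split_ifs <;> omega] at h
  rw [tset_pair (fun u => Mat2 1 a 2 b u (2+1)) (4-a) (5-b) (by omega)
    (by simp only [mat2_apply]; split_ifs <;> omega)
    (by simp only [mat2_apply]; split_ifs <;> omega)
    (fun u hu hu' => by simp only [mat2_apply]; split_ifs <;> omega)] at h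
  rw [finsum_mem_pair (dta_ne (by omega))] at h
  rw [show (∏ᶠ u, Nat.choose (Mat2 1 a 2 b u 2 + dta (4-a) u) (dta (4-a) u)) = 1 from
    finprod_eq_one_of_forall_eq_one (fun u => by
      by_cases hu : u = 4-a
      · rw [hu, show Mat2 1 a 2 b (4-a) 2 = 0 by simp only [mat2_apply]; split_ifs <;> omega]
        simp [dta]
      · simp [dta, hu])] at h
  rw [show (∏ᶠ u, Nat.choose (Mat2 1 a 2 b u 2 + dta (5-b) u) (dta (5-b) u)) = 1 from
    finprod_eq_one_of_forall_eq_one (fun u => by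
      by_cases hu : u = 5-b
      · rw [hu, show Mat2 1 a 2 b (5-b) 2 = 0 by simp only [mat2_apply]; split_ifs <;> omega]
        simp [dta]
      · simp [dta, hu])] at h
  rw [show colSub 2 2 (dta (4-a)) (Mat2 1 a 2 b) = Mat2 1 (a-1) 2 b by
    funext x y
    simp only [colSub, mat2_apply, dta, Nat.cast_ofNat]
    split_ifs <;> omega] at h
  rw [show colSub 2 2 (dta (5-b)) (Mat2 1 a 2 b) = Mat2 1 a 2 (b-1) by
    funext x y
    simp only [colSub, mat2_apply, dta, Nat.cast_ofNat]
    split_ifs <;> omega] at h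
  rw [h]
  norm_num

end PartI
section PartJ
open Function LaurentPolynomial

variable {S : Type} [Ring S] [Algebra ℚ S] (H : AffineSchur22 S)

lemma did (c d : ℤ) : H.e (Mat2 1 1 2 2) * H.e (Mat2 1 c 2 d) = H.e (Mat2 1 c 2 d) := by
  have h := H.diag_row (Mat2 1 c 2 d) (mem_theta_mat2 1 c 2 d)
  rw [rowS_mat2_nu, dnu_eq] at h
  exact h

lemma shift1 (k c d : ℤ) :
    H.e (Mat2 1 (1 + 2*k) 2 2) * H.e (Mat2 1 c 2 d) = H.e (Mat2 1 (c + 2*k) 2 d) := by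
  rcases eq_or_ne k 0 with rfl | hk
  · norm_num
    exact did H c d
  · exact app3 H k hk c d

lemma shift2 (k c d : ℤ) :
    H.e (Mat2 1 1 2 (2 + 2*k)) * H.e (Mat2 1 c 2 d) = H.e (Mat2 1 c 2 (d + 2*k)) := by
  rcases eq_or_ne k 0 with rfl | hk
  · norm_num
    exact did H c d
  · exact app4 H k hk c d

lemma swap_mul (c d : ℤ) (hcd : c ≠ d) :
    H.e (Mat2 1 2 2 1) * H.e (Mat2 1 c 2 d) = H.e (Mat2 1 d 2 c) := by
  have h7 := app7 H 1 2 (by omega)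
  -- e(B1) * e(C1) = e(diag nu) + e(s)
  have hs : H.e (Mat2 1 2 2 1) = H.e (Mat2 1 2 2 2) * H.e (Mat2 2 1 2 2) - H.e (Mat2 1 1 2 2) := by
    rw [h7]; abel
  rw [hs, sub_mul, mul_assoc, app6 H c d hcd, app7 H c d hcd, did H c d]
  abel

lemma prod_ee {a b c d : ℤ} (hab : ¬ (2:ℤ) ∣ (a + b)) (hcd : ¬ (2:ℤ) ∣ (c + d)) :
    H.e (Mat2 1 a 2 b) * H.e (Mat2 1 c 2 d) =
      if (2:ℤ) ∣ (a - 1) then H.e (Mat2 1 (c + a - 1) 2 (d + b - 2))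
      else H.e (Mat2 1 (d + a - 2) 2 (c + b - 1)) := by
  by_cases ha : (2:ℤ) ∣ (a - 1)
  · rw [if_pos ha]
    have hb2 : (2:ℤ) ∣ (b - 2) := by omega
    obtain ⟨m1, hm1⟩ := ha
    obtain ⟨m2, hm2⟩ := hb2
    have hu : Mat2 1 a 2 b = Mat2 1 (1 + 2*m1) 2 (2 + 2*m2) := by
      rw [show a = 1 + 2*m1 by omega, show b = 2 + 2*m2 by omega]
    rw [hu, ← shift1 H m1 1 (2 + 2*m2)]
    rw [mul_assoc, shift2 H m2 c d, shift1 H m1 c (d + 2*m2)]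
    rw [show c + 2*m1 = c + a - 1 by omega, show d + 2*m2 = d + b - 2 by omega]
  · rw [if_neg ha]
    have ha2 : (2:ℤ) ∣ (a - 2) := by omega
    have hb2 : (2:ℤ) ∣ (b - 1) := by omega
    have hcd' : c ≠ d := by omega
    obtain ⟨m1, hm1⟩ := ha2
    obtain ⟨m2, hm2⟩ := hb2
    have hu : Mat2 1 a 2 b = Mat2 1 (2 + 2*m1) 2 (1 + 2*m2) := by
      rw [show a = 2 + 2*m1 by omega, show b = 1 + 2*m2 by omega]
    have hdec : H.e (Mat2 1 (2 + 2*m1) 2 (1 + 2*m2))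
        = H.e (Mat2 1 (1 + 2*m1) 2 2) * (H.e (Mat2 1 1 2 (2 + 2*m2)) * H.e (Mat2 1 2 2 1)) := by
      rw [shift2 H m2 2 1, shift1 H m1 2 (1 + 2*m2)]
    rw [hu, hdec, mul_assoc, mul_assoc, swap_mul H c d hcd', shift2 H m2 d c,
      shift1 H m1 d (c + 2*m2)]
    rw [show d + 2*m1 = d + a - 2 by omega, show c + 2*m2 = c + b - 1 by omega]

-- membership in the ideal
lemma e_dl_mem : H.e (diagM lam0) ∈ Isp H := by
  have := mem_Isp_gen H 1 1
  rwa [one_mul, mul_one] at this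

lemma e_tE21_mem : H.e tE21 ∈ Isp H := by
  rw [← app1 H]
  have := mem_Isp_gen H (H.e tE21) 1
  rwa [mul_one] at this

lemma e_dm_mem : H.e (diagM mu0) ∈ Isp H := by
  rw [← app2 H, ← app1 H]
  exact mem_Isp_gen H (H.e tE21) (H.e tE12)

lemma mem_of_row_lam {A : ℤ → ℤ → ℕ} (hA : A ∈ ThetaAff 2 2) (h : rowS A = lam0) :
    H.e A ∈ Isp H := by
  have hd := H.diag_row A hA
  rw [h] at hd
  rw [← hd]
  exact Isp_mul_right H (e_dl_mem H) _

lemma mem_of_row_mu {A : ℤ → ℤ → ℕ} (hA : A ∈ ThetaAff 2 2) (h : rowS A = mu0) :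
    H.e A ∈ Isp H := by
  have hd := H.diag_row A hA
  rw [h] at hd
  rw [← hd]
  exact Isp_mul_right H (e_dm_mem H) _

lemma mem_of_col_lam {A : ℤ → ℤ → ℕ} (hA : A ∈ ThetaAff 2 2) (h : colS A = lam0) :
    H.e A ∈ Isp H := by
  have hd := H.diag_col A hA
  rw [h] at hd
  rw [← hd]
  exact Isp_mul_left H _ (e_dl_mem H)

lemma mem_of_col_mu {A : ℤ → ℤ → ℕ} (hA : A ∈ ThetaAff 2 2) (h : colS A = mu0) :
    H.e A ∈ Isp H := by
  have hd := H.diag_col A hA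
  rw [h] at hd
  rw [← hd]
  exact Isp_mul_left H _ (e_dm_mem H)

lemma rel_step {a b : ℤ} (h : ¬ (2:ℤ) ∣ (a + b)) :
    H.e (Mat2 1 a 2 b) + H.e (Mat2 1 (a+1) 2 (b-1)) ∈ Isp H := by
  by_cases ha : (2:ℤ) ∣ (a - 1)
  · -- a odd, b even : use app9 with (a+1, b)
    have h9 := app9 H (a+1) b (by omega) (by omega)
    rw [show a + 1 - 1 = a by ring] at h9
    rw [← h9]
    apply Isp_mul_left
    exact mem_of_row_mu H (mem_theta_mat2 2 1 2 2) (rowS_mat2_mu 1 2)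
  · -- a even, b odd : use app10 with (a+1, b)
    have h10 := app10 H (a+1) b (by omega) (by omega)
    rw [show a + 1 - 1 = a by ring] at h10
    rw [← h10]
    apply Isp_mul_left
    exact mem_of_row_lam H (mem_theta_mat2 1 1 1 0) (rowS_mat2_lam 1 0)

lemma cong_iter (j : ℤ) :
    ∀ a b : ℤ, ¬ (2:ℤ) ∣ (a + b) →
      H.e (Mat2 1 a 2 b) - ((-1:ℚ)) ^ j • H.e (Mat2 1 (a + j) 2 (b - j)) ∈ Isp H := by
  induction j using Int.induction_on with
  | zero =>
      intro a b hab
      norm_num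
  | succ n ih =>
      intro a b hab
      have key := rel_step H (a := a + n) (b := b - n) (by omega)
      have hz : ((-1:ℚ)) ^ ((n:ℤ)+1) = -(((-1:ℚ)) ^ (n:ℤ)) := by
        rw [zpow_add_one₀ (by norm_num : (-1:ℚ) ≠ 0)]
        ring
      have hrw : H.e (Mat2 1 a 2 b) - ((-1:ℚ)) ^ ((n:ℤ)+1) • H.e (Mat2 1 (a + ((n:ℤ)+1)) 2 (b - ((n:ℤ)+1)))
          = (H.e (Mat2 1 a 2 b) - ((-1:ℚ)) ^ (n:ℤ) • H.e (Mat2 1 (a + n) 2 (b - n)))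
            + ((-1:ℚ)) ^ (n:ℤ) • (H.e (Mat2 1 (a + n) 2 (b - n)) + H.e (Mat2 1 (a + n + 1) 2 (b - n - 1))) := by
        rw [hz, show a + ((n:ℤ)+1) = a + n + 1 by ring, show b - ((n:ℤ)+1) = b - n - 1 by ring]
        rw [neg_smul, smul_add]
        abel
      rw [hrw]
      exact Submodule.add_mem _ (ih a b hab) (Submodule.smul_mem _ _ key)
  | pred n ih =>
      intro a b hab
      have key := rel_step H (a := a - n - 1) (b := b + n + 1) (by omega)
      rw [show a - (n:ℤ) - 1 + 1 = a - n by ring, show b + (n:ℤ) + 1 - 1 = b + n by ring] at key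
      have hz : ((-1:ℚ)) ^ (-(n:ℤ)-1) = -(((-1:ℚ)) ^ (-(n:ℤ))) := by
        rw [show (-(n:ℤ)-1) = (-(n:ℤ)) + (-1) by ring, zpow_add₀ (by norm_num : (-1:ℚ) ≠ 0)]
        norm_num
      have hrw : H.e (Mat2 1 a 2 b) - ((-1:ℚ)) ^ (-(n:ℤ)-1) • H.e (Mat2 1 (a + (-(n:ℤ)-1)) 2 (b - (-(n:ℤ)-1)))
          = (H.e (Mat2 1 a 2 b) - ((-1:ℚ)) ^ (-(n:ℤ)) • H.e (Mat2 1 (a + (-(n:ℤ))) 2 (b - (-(n:ℤ)))))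
            + ((-1:ℚ)) ^ (-(n:ℤ)) • (H.e (Mat2 1 (a - n - 1) 2 (b + n + 1)) + H.e (Mat2 1 (a - n) 2 (b + n))) := by
        rw [hz, show a + (-(n:ℤ)-1) = a - n - 1 by ring, show b - (-(n:ℤ)-1) = b + n + 1 by ring,
          show a + (-(n:ℤ)) = a - n by ring, show b - (-(n:ℤ)) = b + n by ring]
        rw [neg_smul, smul_add]
        abel
      rw [hrw]
      exact Submodule.add_mem _ (ih a b hab) (Submodule.smul_mem _ _ key)

lemma cong_norm {a b : ℤ} (hab : ¬ (2:ℤ) ∣ (a + b)) :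
    H.e (Mat2 1 a 2 b)
      - (if (2:ℤ) ∣ (a - 1) then (1:ℚ) else -1) • H.e (Mat2 1 (1 + 2*((a+b-3)/2)) 2 2) ∈ Isp H := by
  have := cong_iter H (b - 2) a b hab
  rw [show a + (b - 2) = 1 + 2*((a+b-3)/2) by omega, show b - (b - 2) = 2 by ring] at this
  have hsgn : ((-1:ℚ)) ^ (b - 2) = (if (2:ℤ) ∣ (a - 1) then (1:ℚ) else -1) := by
    by_cases hb : (2:ℤ) ∣ (b - 2)
    · rw [neg_one_zpow_even hb, if_pos (by omega)]
    · rw [neg_one_zpow_odd hb, if_neg (by omega)]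
  rw [hsgn] at this
  exact this

end PartJ
section PartK
open Function LaurentPolynomial

variable {S : Type} [Ring S] [Algebra ℚ S] (H : AffineSchur22 S)

lemma satL (w : ℤ → ℕ) (hw : diagM w ∈ ThetaAff 2 2) (hwn : w ≠ nu0) :
    ∀ y : S, piL H (H.e (diagM w) * y) = 0 := by
  apply top_induction H (p := fun y => piL H (H.e (diagM w) * y) = 0)
  · intro B hB
    by_cases hr : rowS B = w
    · have hd := H.diag_row B hB
      rw [hr] at hd
      rw [hd, piL_e]
      exact valL_zero_of_not (fun hs => hwn (hr.symm.trans (surv_row hs)))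
    · rw [H.mul_disjoint _ _ hw hB (by rw [colS_diag]; exact fun hh => hr hh.symm), map_zero]
  · rw [mul_zero, map_zero]
  · intro x y hx hy
    rw [mul_add, map_add, hx, hy, add_zero]
  · intro c x hx
    rw [mul_smul_comm, map_smul, hx, smul_zero]

lemma satR (w : ℤ → ℕ) (hw : diagM w ∈ ThetaAff 2 2) (hwn : w ≠ nu0) :
    ∀ y : S, piL H (y * H.e (diagM w)) = 0 := by
  apply top_induction H (p := fun y => piL H (y * H.e (diagM w)) = 0)
  · intro B hB
    by_cases hr : colS B = w
    · have hd := H.diag_col B hB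
      rw [hr] at hd
      rw [hd, piL_e]
      exact valL_zero_of_not (fun hs => hwn (hr.symm.trans (surv_col hs)))
    · rw [H.mul_disjoint _ _ hB hw (by rw [rowS_diag]; exact hr), map_zero]
  · rw [zero_mul, map_zero]
  · intro x y hx hy
    rw [add_mul, map_add, hx, hy, add_zero]
  · intro c x hx
    rw [smul_mul_assoc, map_smul, hx, smul_zero]

lemma valL_add_cancel {x1 y1 x2 y2 : ℤ} (h1 : ¬ (2:ℤ) ∣ (x1 + y1)) (hsum : x1 + y1 = x2 + y2)
    (hx : ¬ (2:ℤ) ∣ (x1 - x2)) :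
    valL (Mat2 1 x1 2 y1) + valL (Mat2 1 x2 2 y2) = 0 := by
  rw [valL_mat2 h1, valL_mat2 (by omega)]
  rw [show (x2 + y2 - 3)/2 = (x1 + y1 - 3)/2 by omega]
  by_cases hs : (2:ℤ) ∣ (x1 - 1)
  · rw [if_pos hs, if_neg (by omega)]
    simp only [map_neg, map_one]
    ring
  · rw [if_neg hs, if_pos (by omega)]
    simp only [map_neg, map_one]
    ring

lemma piL_mul_basis {u v : ℤ → ℤ → ℕ} (hu : u ∈ ThetaAff 2 2) (hv : v ∈ ThetaAff 2 2) :
    piL H (H.e u * H.e v) = valL u * valL v := by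
  by_cases hcr : colS u = rowS v
  swap
  · rw [H.mul_disjoint u v hu hv hcr, map_zero]
    by_cases hsu : isSurv u
    · by_cases hsv : isSurv v
      · exact absurd ((surv_col hsu).trans (surv_row hsv).symm) hcr
      · rw [valL_zero_of_not hsv, mul_zero]
    · rw [valL_zero_of_not hsu, zero_mul]
  rcases wt_row hu with hru | hru | hru
  · -- rowS u = lam0
    rw [valL_zero_of_not (fun hs => lam0_ne_nu0 (hru.symm.trans (surv_row hs))), zero_mul]
    have heu := H.diag_row u hu
    rw [hru] at heu
    rw [← heu, mul_assoc]
    exact satL H lam0 mem_theta_dl lam0_ne_nu0 _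
  · -- rowS u = mu0
    rw [valL_zero_of_not (fun hs => mu0_ne_nu0 (hru.symm.trans (surv_row hs))), zero_mul]
    have heu := H.diag_row u hu
    rw [hru] at heu
    rw [← heu, mul_assoc]
    exact satL H mu0 mem_theta_dm mu0_ne_nu0 _
  · -- rowS u = nu0
    rcases wt_col hv with hcv | hcv | hcv
    · rw [valL_zero_of_not (fun hs => lam0_ne_nu0 (hcv.symm.trans (surv_col hs))), mul_zero]
      have hev := H.diag_col v hv
      rw [hcv] at hev
      rw [← hev, ← mul_assoc]
      exact satR H lam0 mem_theta_dl lam0_ne_nu0 _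
    · rw [valL_zero_of_not (fun hs => mu0_ne_nu0 (hcv.symm.trans (surv_col hs))), mul_zero]
      have hev := H.diag_col v hv
      rw [hcv] at hev
      rw [← hev, ← mul_assoc]
      exact satR H mu0 mem_theta_dm mu0_ne_nu0 _
    · -- colS v = nu0
      obtain ⟨a, b, rfl⟩ := class_row_nu hu hru
      rcases wt_col hu with hcu | hcu | hcu
      · -- colS u = lam0 : a, b odd; rowS v = lam0
        obtain ⟨ha, hb⟩ := parity_of_colS_lam hcu
        have hrv : rowS v = lam0 := by rw [← hcr, hcu]
        obtain ⟨c, d, rfl⟩ := class_row_lam hv hrv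
        have hcd : ¬ (2:ℤ) ∣ (c + d) := parity_of_colS_nu hcv
        have hcd' : c ≠ d := by omega
        rw [valL_zero_of_not (not_surv_parity (by omega)), zero_mul]
        rw [← app5 H c d hcd', ← mul_assoc, app8 H a b ha hb, add_mul, map_add]
        rw [prod_ee H (by omega) hcd, prod_ee H (by omega) hcd]
        rw [if_neg (by omega), if_pos (by omega)]
        rw [piL_e, piL_e]
        exact valL_add_cancel (by omega) (by omega) (by omega)
      · -- colS u = mu0 : a, b even; rowS v = mu0
        obtain ⟨ha, hb⟩ := parity_of_colS_mu hcu
        have hrv : rowS v = mu0 := by rw [← hcr, hcu]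
        obtain ⟨c, d, rfl⟩ := class_row_mu hv hrv
        have hcd : ¬ (2:ℤ) ∣ (c + d) := parity_of_colS_nu hcv
        have hcd' : c ≠ d := by omega
        rw [valL_zero_of_not (not_surv_parity (by omega)), zero_mul]
        rw [← app6 H c d hcd', ← mul_assoc, app9 H a b ha hb, add_mul, map_add]
        rw [prod_ee H (by omega) hcd, prod_ee H (by omega) hcd]
        rw [if_pos (by omega), if_neg (by omega)]
        rw [piL_e, piL_e]
        exact valL_add_cancel (by omega) (by omega) (by omega)
      · -- colS u = nu0
        have hab : ¬ (2:ℤ) ∣ (a + b) := parity_of_colS_nu hcu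
        have hrv : rowS v = nu0 := by rw [← hcr, hcu]
        obtain ⟨c, d, rfl⟩ := class_row_nu hv hrv
        have hcd : ¬ (2:ℤ) ∣ (c + d) := parity_of_colS_nu hcv
        rw [prod_ee H hab hcd, valL_mat2 hab, valL_mat2 hcd]
        by_cases hs : (2:ℤ) ∣ (a - 1)
        · rw [if_pos hs, if_pos hs, piL_e, valL_mat2 (by omega)]
          by_cases hc : (2:ℤ) ∣ (c - 1)
          · rw [if_pos (by omega), if_pos hc,
              show (c + a - 1 + (d + b - 2) - 3)/2 = (a + b - 3)/2 + ((c + d - 3)/2) by omega,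
              T_add]
            simp only [map_neg, map_one]
            ring
          · rw [if_neg (by omega), if_neg hc,
              show (c + a - 1 + (d + b - 2) - 3)/2 = (a + b - 3)/2 + ((c + d - 3)/2) by omega,
              T_add]
            simp only [map_neg, map_one]
            ring
        · rw [if_neg hs, if_neg hs, piL_e, valL_mat2 (by omega)]
          by_cases hc : (2:ℤ) ∣ (c - 1)
          · rw [if_neg (by omega), if_pos hc,
              show (d + a - 2 + (c + b - 1) - 3)/2 = (a + b - 3)/2 + ((c + d - 3)/2) by omega,
              T_add]
            simp only [map_neg, map_one]
            ring
          · rw [if_pos (by omega), if_neg hc,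
              show (d + a - 2 + (c + b - 1) - 3)/2 = (a + b - 3)/2 + ((c + d - 3)/2) by omega,
              T_add]
            simp only [map_neg, map_one]
            ring

lemma piL_mul (x y : S) : piL H (x * y) = piL H x * piL H y := by
  have key : ∀ u ∈ ThetaAff 2 2, ∀ y : S, piL H (H.e u * y) = piL H (H.e u) * piL H y := by
    intro u hu
    apply top_induction H (p := fun y => piL H (H.e u * y) = piL H (H.e u) * piL H y)
    · intro B hB
      rw [piL_mul_basis H hu hB, piL_e, piL_e]
    · rw [mul_zero, map_zero, mul_zero]
    · intro x₁ x₂ h1 h2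
      rw [mul_add, map_add, map_add, mul_add, h1, h2]
    · intro c x₁ h1
      rw [mul_smul_comm, map_smul, map_smul, mul_smul_comm, h1]
  have main : ∀ x : S, ∀ y : S, piL H (x * y) = piL H x * piL H y := by
    apply top_induction H (p := fun x => ∀ y : S, piL H (x * y) = piL H x * piL H y)
    · intro A hA y
      exact key A hA y
    · intro y
      rw [zero_mul, map_zero, zero_mul]
    · intro x₁ x₂ h1 h2 y
      rw [add_mul, map_add, map_add, add_mul, h1, h2]
    · intro c x₁ h1 y
      rw [smul_mul_assoc, map_smul, map_smul, smul_mul_assoc, h1]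
  exact main x y

lemma one_eq : (1:S) = H.e (diagM lam0) + H.e (diagM mu0) + H.e (diagM nu0) := by
  have hx : ∀ x : S, (H.e (diagM lam0) + H.e (diagM mu0) + H.e (diagM nu0)) * x = x := by
    apply top_induction H
      (p := fun x => (H.e (diagM lam0) + H.e (diagM mu0) + H.e (diagM nu0)) * x = x)
    · intro B hB
      rw [add_mul, add_mul]
      rcases wt_row hB with h | h | h
      · rw [show H.e (diagM lam0) * H.e B = H.e B by have hd := H.diag_row B hB; rwa [h] at hd]
        rw [H.mul_disjoint _ _ mem_theta_dm hB
          (by rw [colS_diag, h]; exact fun hh => lam0_ne_mu0 hh.symm)]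
        rw [H.mul_disjoint _ _ mem_theta_dnu hB
          (by rw [colS_diag, h]; exact fun hh => lam0_ne_nu0 hh.symm)]
        abel
      · rw [show H.e (diagM mu0) * H.e B = H.e B by have hd := H.diag_row B hB; rwa [h] at hd]
        rw [H.mul_disjoint _ _ mem_theta_dl hB
          (by rw [colS_diag, h]; exact fun hh => lam0_ne_mu0 hh)]
        rw [H.mul_disjoint _ _ mem_theta_dnu hB
          (by rw [colS_diag, h]; exact fun hh => mu0_ne_nu0 hh.symm)]
        abel
      · rw [show H.e (diagM nu0) * H.e B = H.e B by have hd := H.diag_row B hB; rwa [h] at hd]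
        rw [H.mul_disjoint _ _ mem_theta_dl hB
          (by rw [colS_diag, h]; exact fun hh => lam0_ne_nu0 hh)]
        rw [H.mul_disjoint _ _ mem_theta_dm hB
          (by rw [colS_diag, h]; exact fun hh => mu0_ne_nu0 hh)]
        abel
    · rw [mul_zero]
    · intro x y hxx hyy
      rw [mul_add, hxx, hyy]
    · intro c x hxx
      rw [mul_smul_comm, hxx]
  have h1 := hx 1
  rw [mul_one] at h1
  exact h1.symm

lemma piL_one : piL H 1 = 1 := by
  rw [one_eq H, map_add, map_add, piL_e, piL_e, piL_e]
  rw [valL_zero_of_not (fun hs => lam0_ne_nu0 ((rowS_diag lam0).symm.trans (surv_row hs)))]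
  rw [valL_zero_of_not (fun hs => mu0_ne_nu0 ((rowS_diag mu0).symm.trans (surv_row hs)))]
  rw [dnu_eq, valL_mat2 (by omega), if_pos (by omega)]
  rw [show ((1:ℤ) + 2 - 3)/2 = 0 by norm_num, T_zero, map_one]
  norm_num

lemma sub_phi_mem : ∀ x : S, x - phiL H (piL H x) ∈ Isp H := by
  apply top_induction H (p := fun x => x - phiL H (piL H x) ∈ Isp H)
  · intro A hA
    rw [piL_e]
    by_cases hs : isSurv A
    · obtain ⟨⟨a, b⟩, rfl, hab⟩ := hs
      rw [valL_mat2 hab,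
        show (LaurentPolynomial.C (if (2:ℤ) ∣ (a-1) then (1:ℚ) else -1) *
            LaurentPolynomial.T ((a+b-3)/2))
          = AddMonoidAlgebra.single ((a+b-3)/2) (if (2:ℤ) ∣ (a-1) then (1:ℚ) else -1) from
          (LaurentPolynomial.single_eq_C_mul_T _ _).symm,
        phiL_single]
      exact cong_norm H hab
    · rw [valL_zero_of_not hs, map_zero, sub_zero]
      rcases wt_row hA with h | h | h
      · exact mem_of_row_lam H hA h
      · exact mem_of_row_mu H hA h
      · rcases wt_col hA with h2 | h2 | h2
        · exact mem_of_col_lam H hA h2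
        · exact mem_of_col_mu H hA h2
        · exfalso
          apply hs
          obtain ⟨a, b, rfl⟩ := class_row_nu hA h
          exact ⟨(a, b), rfl, parity_of_colS_nu h2⟩
  · rw [map_zero, map_zero, sub_zero]
    exact Submodule.zero_mem _
  · intro x y hxx hyy
    rw [map_add, map_add,
      show x + y - (phiL H (piL H x) + phiL H (piL H y))
        = (x - phiL H (piL H x)) + (y - phiL H (piL H y)) by abel]
    exact Submodule.add_mem _ hxx hyy
  · intro c x hxx
    rw [map_smul, map_smul, ← smul_sub]
    exact Submodule.smul_mem _ _ hxx

end PartK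
end

/-- Lemma 4.1 of the paper. In `S△(2,2)` over `ℚ` at `q = 1` with
`λ = (2,0)`, the quotient of `S△(2,2)` by the two-sided ideal generated by `e_λ` is
isomorphic as a `ℚ`-algebra to the Laurent polynomial ring `ℚ[x, x⁻¹]` (presented by a
surjective `ℚ`-algebra map whose kernel is that ideal). -/
theorem schur_quotient_iso_laurent (S : Type) [Ring S] [Algebra ℚ S]
    (H : AffineSchur22 S) :
    ∃ π : S →ₐ[ℚ] LaurentPolynomial ℚ,
      Function.Surjective π ∧
      ∀ x : S, π x = 0 ↔
        x ∈ Submodule.span ℚ {y : S | ∃ a b : S, y = a * H.e (diagM lam0) * b} := by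
  refine ⟨AlgHom.ofLinearMap (piL H) (piL_one H) (piL_mul H), ?_, ?_⟩
  · intro p
    exact ⟨phiL H p, piL_phiL H p⟩
  · intro x
    constructor
    · intro hx
      have hx' : piL H x = 0 := hx
      have h := sub_phi_mem H x
      rw [hx', map_zero, sub_zero] at h
      exact h
    · intro hx
      show piL H x = 0
      refine Submodule.span_induction ?_ ?_ ?_ ?_ hx
      · rintro y ⟨a, b, rfl⟩
        rw [piL_mul, piL_mul, piL_e]
        rw [valL_zero_of_not (fun hs => lam0_ne_nu0 ((rowS_diag lam0).symm.trans (surv_row hs)))]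
        rw [mul_zero, zero_mul]
      · exact map_zero _
      · intro p q _ _ hp hq
        rw [map_add, hp, hq, add_zero]
      · intro c p _ hp
        rw [map_smul, hp, smul_zero]
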